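/- arXiv:2008.11025 — 9 statements merged into one kernel-verified Lean document; each statement's English description precedes it below -/
import Mathlib

section
/- Let u, v ∈ U with ū, v̄ ∈ Z(Ū). Then [u,v] = h·c for some c ∈ U whose class c̄ lies in Z(Ū), and [D_u, D_v] = D_c (that is, [D_u, D_v] = D_{[u,v]/h}). Consequently, the set L := { D_v : v ∈ U, v̄ ∈ Z(Ū) } is a Lie subalgebra of the Lie algebra of ℂ-linear derivations of Ū. -/
/-- Core noncommutative Jacobi-type identity: if `H` is central and
`[u,v] = H c`, `[v,b] = H s`, `[u,s] = H s'`, `[u,b] = H t`, `[v,t] = H t'`,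
then `H * ([c,b] - H (s' - t')) = 0`. -/
lemma stmt5_core {U : Type*} [Ring U] (H u v c b s t s' t' : U)
    (hcomm : ∀ x : U, H * x = x * H)
    (h1 : u * v - v * u = H * c)
    (h2 : v * b - b * v = H * s)
    (h3 : u * s - s * u = H * s')
    (h4 : u * b - b * u = H * t)
    (h5 : v * t - t * v = H * t') :
    H * (c * b - b * c - H * (s' - t')) = 0 := by
  have L : ∀ x y : U, H * (x * y) = x * (H * y) := fun x y => by
    rw [← mul_assoc, hcomm x, mul_assoc]
  have R : ∀ x y : U, H * (x * y) = (H * x) * y := fun x y => (mul_assoc H x y).symm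
  calc H * (c * b - b * c - H * (s' - t'))
      = H * (c * b) - H * (b * c) - H * (H * s') + H * (H * t') := by noncomm_ring
    _ = (H * c) * b - b * (H * c) - H * (u * s - s * u) + H * (v * t - t * v) := by
        rw [← h3, ← h5, R c b, L b c]
    _ = (H * c) * b - b * (H * c) - (u * (H * s) - (H * s) * u)
          + (v * (H * t) - (H * t) * v) := by
        rw [mul_sub H (u*s), mul_sub H (v*t), L u s, R s u, L v t, R t v]
    _ = (u * v - v * u) * b - b * (u * v - v * u)
          - (u * (v * b - b * v) - (v * b - b * v) * u)
          + (v * (u * b - b * u) - (u * b - b * u) * v) := by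
        rw [← h1, ← h2, ← h4]
    _ = 0 := by noncomm_ring

/-- `[u,v] = h·c` with `c̄` central, `[D_u, D_v] = D_c`, and the set
`L = { D_v : v̄ ∈ Z(Ū) }` is a Lie subalgebra of the derivations of `Ū`. -/
theorem stmt5
    (A : Type*) [CommRing A] [Algebra ℂ A] (h : A)
    (hA : Function.Bijective (algebraMap ℂ (A ⧸ Ideal.span {h})))
    (U : Type*) [Ring U] [Algebra ℂ U] [Algebra A U] [IsScalarTower ℂ A U]
    (hreg : ∀ x : U, algebraMap A U h * x = 0 → x = 0)
    (Ubar : Type*) [Ring Ubar] [Algebra ℂ Ubar]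
    (π : U →ₐ[ℂ] Ubar) (hπ : Function.Surjective π)
    (hker : ∀ x : U, π x = 0 ↔ ∃ y : U, x = algebraMap A U h * y)
    (u v : U) (hu : ∀ t : Ubar, π u * t = t * π u) (hv : ∀ t : Ubar, π v * t = t * π v) :
    (∃ c : U, u * v - v * u = algebraMap A U h * c ∧ ∀ t : Ubar, π c * t = t * π c) ∧
    (∀ (c : U) (Du Dv Dc : Ubar →ₗ[ℂ] Ubar),
        u * v - v * u = algebraMap A U h * c →
        (∀ a w : U, u * a - a * u = algebraMap A U h * w → Du (π a) = π w) →
        (∀ a w : U, v * a - a * v = algebraMap A U h * w → Dv (π a) = π w) →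
        (∀ a w : U, c * a - a * c = algebraMap A U h * w → Dc (π a) = π w) →
        ∀ y : Ubar, Du (Dv y) - Dv (Du y) = Dc y) ∧
    -- every element of L is a derivation of Ū …
    (∀ D : Ubar →ₗ[ℂ] Ubar,
        (∃ a : U, (∀ t : Ubar, π a * t = t * π a) ∧
            ∀ b w : U, a * b - b * a = algebraMap A U h * w → D (π b) = π w) →
        ∀ x y : Ubar, D (x * y) = D x * y + x * D y) ∧
    -- … and L is closed under the commutator bracket
    (∀ D D' : Ubar →ₗ[ℂ] Ubar,
        (∃ a : U, (∀ t : Ubar, π a * t = t * π a) ∧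
            ∀ b w : U, a * b - b * a = algebraMap A U h * w → D (π b) = π w) →
        (∃ a : U, (∀ t : Ubar, π a * t = t * π a) ∧
            ∀ b w : U, a * b - b * a = algebraMap A U h * w → D' (π b) = π w) →
        ∃ a : U, (∀ t : Ubar, π a * t = t * π a) ∧
          ∀ b w : U, a * b - b * a = algebraMap A U h * w →
            (D ∘ₗ D' - D' ∘ₗ D) (π b) = π w) := by
  set H := algebraMap A U h with hH
  have hcomm : ∀ x : U, H * x = x * H := fun x => Algebra.commutes h x
  -- existence of the "divided bracket" for central-mod-h elements
  have getw : ∀ a : U, (∀ t : Ubar, π a * t = t * π a) →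
      ∀ b : U, ∃ w, a * b - b * a = H * w := by
    intro a ha b
    obtain ⟨y, hy⟩ := (hker (a * b - b * a)).mp
      (by rw [map_sub, map_mul, map_mul, ha (π b), sub_self])
    exact ⟨y, hy⟩
  -- main structural lemma
  have brCentral : ∀ p q c : U, (∀ t : Ubar, π p * t = t * π p) →
      (∀ t : Ubar, π q * t = t * π q) → p * q - q * p = H * c →
      ∀ b : U, ∃ s' t' : U, c * b - b * c = H * (s' - t') ∧
        (∃ s, q * b - b * q = H * s ∧ p * s - s * p = H * s') ∧
        (∃ t, p * b - b * p = H * t ∧ q * t - t * q = H * t') := by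
    intro p q c hp hq h1 b
    obtain ⟨s, hs⟩ := getw q hq b
    obtain ⟨s', hs'⟩ := getw p hp s
    obtain ⟨t, ht⟩ := getw p hp b
    obtain ⟨t', ht'⟩ := getw q hq t
    have key := stmt5_core H p q c b s t s' t' hcomm h1 hs hs' ht ht'
    have : c * b - b * c - H * (s' - t') = 0 := hreg _ key
    exact ⟨s', t', sub_eq_zero.mp this, ⟨s, hs, hs'⟩, ⟨t, ht, ht'⟩⟩
  -- centrality of any such c
  have centC : ∀ p q c : U, (∀ t : Ubar, π p * t = t * π p) →
      (∀ t : Ubar, π q * t = t * π q) → p * q - q * p = H * c →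
      ∀ t : Ubar, π c * t = t * π c := by
    intro p q c hp hq h1 t
    obtain ⟨b, rfl⟩ := hπ t
    obtain ⟨s', t', hcb, -, -⟩ := brCentral p q c hp hq h1 b
    have h0 := (hker (c * b - b * c)).mpr ⟨s' - t', hcb⟩
    rw [map_sub, map_mul, map_mul, sub_eq_zero] at h0
    exact h0
  refine ⟨?_, ?_, ?_, ?_⟩
  · -- Part 1
    obtain ⟨c, hc⟩ := getw u hu v
    exact ⟨c, hc, centC u v c hu hv hc⟩
  · -- Part 2
    intro c Du Dv Dc h1 hDu hDv hDc y
    obtain ⟨b, rfl⟩ := hπ y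
    obtain ⟨s', t', hcb, ⟨s, hs, hs'⟩, ⟨t, ht, ht'⟩⟩ := brCentral u v c hu hv h1 b
    rw [hDv b s hs, hDu s s' hs', hDu b t ht, hDv t t' ht', hDc b (s' - t') hcb, map_sub]
  · -- Part 3: derivations
    intro D ⟨a, ha, hD⟩ x y
    obtain ⟨b, rfl⟩ := hπ x
    obtain ⟨b', rfl⟩ := hπ y
    obtain ⟨w, hw⟩ := getw a ha b
    obtain ⟨w', hw'⟩ := getw a ha b'
    have hL : ∀ x y : U, H * (x * y) = x * (H * y) := fun x y => by
      rw [← mul_assoc, hcomm x, mul_assoc]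
    have key : a * (b * b') - (b * b') * a = H * (w * b' + b * w') := by
      calc a * (b * b') - (b * b') * a
          = (a * b - b * a) * b' + b * (a * b' - b' * a) := by noncomm_ring
        _ = (H * w) * b' + b * (H * w') := by rw [hw, hw']
        _ = H * (w * b' + b * w') := by rw [mul_add, hL b w', mul_assoc]
    rw [← map_mul, hD (b * b') (w * b' + b * w') key, hD b w hw, hD b' w' hw',
      map_add, map_mul, map_mul]
  · -- Part 4: closure under bracket
    intro D D' ⟨a, ha, hD⟩ ⟨a', ha', hD'⟩
    obtain ⟨c, hc⟩ := getw a ha a'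
    refine ⟨c, centC a a' c ha ha' hc, ?_⟩
    intro b w hcw
    obtain ⟨s', t', hcb, ⟨s, hs, hs'⟩, ⟨t, ht, ht'⟩⟩ := brCentral a a' c ha ha' hc b
    have hw : w = s' - t' := by
      have h0 : H * (w - (s' - t')) = 0 := by
        rw [mul_sub, ← hcw, ← hcb, sub_self]
      exact sub_eq_zero.mp (hreg _ h0)
    subst hw
    simp only [LinearMap.sub_apply, LinearMap.comp_apply]
    rw [hD' b s hs, hD s s' hs', hD b t ht, hD' t t' ht', map_sub]
end

section
/- Every derivation in L := { D_v : v ∈ U, v̄ ∈ Z } maps Z := Z(Ū) into Z, and L' := { {z, −}|_Z : z ∈ Z } is a Lie subalgebra of the Lie algebra of ℂ-derivations of Z. The restriction map ρ : L → L', D_u ↦ {ū, −}|_Z, is a well-defined surjective Lie algebra homomorphism whose kernel contains all inner derivations of Ū (each inner derivation of Ū lies in L and restricts to 0 on Z). Moreover, if every Casimir element of Z (i.e., every z ∈ Z with {z, y} = 0 for all y ∈ Z) is a scalar multiple of 1, then the kernel of ρ consists exactly of the inner derivations of Ū. -/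
/-- elements of `L` preserve the center `Z`; the Hamiltonian derivations
`L' = {z,−}|_Z` form a Lie algebra; the restriction map `ρ : L → L'` is a well-defined
surjective Lie algebra homomorphism whose kernel contains the inner derivations, and if
all Casimirs are scalars then the kernel consists exactly of inner derivations. -/
theorem stmt6
    (A : Type*) [CommRing A] [Algebra ℂ A] (h : A)
    (hA : Function.Bijective (algebraMap ℂ (A ⧸ Ideal.span {h})))
    (U : Type*) [Ring U] [Algebra ℂ U] [Algebra A U] [IsScalarTower ℂ A U]
    (hreg : ∀ x : U, algebraMap A U h * x = 0 → x = 0)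
    (Ubar : Type*) [Ring Ubar] [Algebra ℂ Ubar]
    (π : U →ₐ[ℂ] Ubar) (hπ : Function.Surjective π)
    (hker : ∀ x : U, π x = 0 ↔ ∃ y : U, x = algebraMap A U h * y)
    (B : Ubar → Ubar → Ubar)
    (hB : ∀ u v w : U, (∀ t : Ubar, π u * t = t * π u) → (∀ t : Ubar, π v * t = t * π v) →
        u * v - v * u = algebraMap A U h * w → B (π u) (π v) = π w) :
    -- (a) every element of L maps the center Z into Z
    (∀ (a : U) (D : Ubar →ₗ[ℂ] Ubar), (∀ t : Ubar, π a * t = t * π a) →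
        (∀ v w : U, a * v - v * a = algebraMap A U h * w → D (π v) = π w) →
        ∀ x : Ubar, (∀ t : Ubar, x * t = t * x) → ∀ t : Ubar, D x * t = t * D x) ∧
    -- (b) L' is closed under the commutator of derivations of Z
    (∀ z z' : Ubar, (∀ t : Ubar, z * t = t * z) → (∀ t : Ubar, z' * t = t * z') →
        ∃ z'' : Ubar, (∀ t : Ubar, z'' * t = t * z'') ∧
          ∀ x : Ubar, (∀ t : Ubar, x * t = t * x) →
            B z (B z' x) - B z' (B z x) = B z'' x) ∧
    -- (c) ρ is well defined: D_a restricted to Z is the Hamiltonian derivation {ā, −}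
    (∀ (a : U) (D : Ubar →ₗ[ℂ] Ubar), (∀ t : Ubar, π a * t = t * π a) →
        (∀ v w : U, a * v - v * a = algebraMap A U h * w → D (π v) = π w) →
        ∀ x : Ubar, (∀ t : Ubar, x * t = t * x) → D x = B (π a) x) ∧
    -- (c') ρ is surjective
    (∀ zc : Ubar, (∀ t : Ubar, zc * t = t * zc) →
        ∃ (a : U) (D : Ubar →ₗ[ℂ] Ubar), π a = zc ∧
          ∀ v w : U, a * v - v * a = algebraMap A U h * w → D (π v) = π w) ∧
    -- (d) ρ is a Lie algebra homomorphism
    (∀ (a b : U) (Da Db : Ubar →ₗ[ℂ] Ubar),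
        (∀ t : Ubar, π a * t = t * π a) → (∀ t : Ubar, π b * t = t * π b) →
        (∀ v w : U, a * v - v * a = algebraMap A U h * w → Da (π v) = π w) →
        (∀ v w : U, b * v - v * b = algebraMap A U h * w → Db (π v) = π w) →
        ∀ x : Ubar, (∀ t : Ubar, x * t = t * x) →
          Da (Db x) - Db (Da x) = B (π a) (B (π b) x) - B (π b) (B (π a) x)) ∧
    -- (e) every inner derivation of Ū lies in L and restricts to 0 on Z
    (∀ w0 : Ubar,
        (∃ (a : U) (D : Ubar →ₗ[ℂ] Ubar), (∀ t : Ubar, π a * t = t * π a) ∧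
            (∀ v w : U, a * v - v * a = algebraMap A U h * w → D (π v) = π w) ∧
            ∀ y : Ubar, D y = w0 * y - y * w0) ∧
        (∀ x : Ubar, (∀ t : Ubar, x * t = t * x) → w0 * x - x * w0 = 0)) ∧
    -- (f) if every Casimir of Z is a scalar, then ker ρ consists of inner derivations
    ((∀ zc : Ubar, (∀ t : Ubar, zc * t = t * zc) →
        (∀ y : Ubar, (∀ t : Ubar, y * t = t * y) → B zc y = 0) →
        ∃ a : ℂ, zc = algebraMap ℂ Ubar a) →
      ∀ (a : U) (D : Ubar →ₗ[ℂ] Ubar), (∀ t : Ubar, π a * t = t * π a) →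
        (∀ v w : U, a * v - v * a = algebraMap A U h * w → D (π v) = π w) →
        (∀ x : Ubar, (∀ t : Ubar, x * t = t * x) → D x = 0) →
        ∃ w0 : Ubar, ∀ y : Ubar, D y = w0 * y - y * w0) := by
  set H : U := algebraMap A U h with hHdef
  have Hc : ∀ x : U, H * x = x * H := fun x => Algebra.commutes h x
  have moveL : ∀ x y : U, H * (x * y) = x * (H * y) := by
    intro x y; rw [← mul_assoc, Hc x, mul_assoc]
  have cancel : ∀ w w' : U, H * w = H * w' → w = w' := by
    intro w w' hww
    have h0 : H * (w - w') = 0 := by rw [mul_sub, hww, sub_self]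
    exact sub_eq_zero.mp (hreg _ h0)
  have exw : ∀ a v : U, (∀ t : Ubar, π a * t = t * π a) → ∃ w, a * v - v * a = H * w := by
    intro a v hc
    have h0 : π (a * v - v * a) = 0 := by
      rw [map_sub, map_mul, map_mul, hc (π v), sub_self]
    exact (hker _).mp h0
  have shiftH : ∀ a0 v : U, (H * a0) * v - v * (H * a0) = H * (a0 * v - v * a0) := by
    intro a0 v
    have hh : v * (H * a0) = H * (v * a0) := by rw [← mul_assoc, ← Hc v, mul_assoc]
    rw [hh, mul_assoc H a0 v, ← mul_sub]
  have central_w : ∀ a v w : U, (∀ t : Ubar, π a * t = t * π a) →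
      (∀ t : Ubar, π v * t = t * π v) → a * v - v * a = H * w →
      ∀ t : Ubar, π w * t = t * π w := by
    intro a v w ha hv hw t
    obtain ⟨u, rfl⟩ := hπ t
    obtain ⟨s, hs⟩ := exw v u hv
    obtain ⟨r, hr⟩ := exw a u ha
    have e1 : H * (w * u - u * w) = (a * v - v * a) * u - u * (a * v - v * a) := by
      rw [mul_sub, ← mul_assoc, moveL u w, ← hw]
    have e2 : H * ((a * s - s * a) + (r * v - v * r))
        = (a * (v * u - u * v) - (v * u - u * v) * a)
          + ((a * u - u * a) * v - v * (a * u - u * a)) := by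
      rw [mul_add, mul_sub, mul_sub, moveL a s, ← mul_assoc H s a,
        ← mul_assoc H r v, moveL v r, ← hs, ← hr]
    have hwu : w * u - u * w = (a * s - s * a) + (r * v - v * r) := by
      apply cancel
      rw [e1, e2]; noncomm_ring
    have e4 := congrArg π hwu
    simp only [map_sub, map_add, map_mul] at e4
    rw [ha (π s), ← hv (π r)] at e4
    have e5 : π w * π u - π u * π w = 0 := by rw [e4]; abel
    exact sub_eq_zero.mp e5
  refine ⟨?_, ?_, ?_, ?_, ?_, ?_, ?_⟩
  · -- (a)
    intro a D ha hD x hx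
    obtain ⟨v, rfl⟩ := hπ x
    obtain ⟨w, hw⟩ := exw a v ha
    rw [hD v w hw]
    exact central_w a v w ha hx hw
  · -- (b)
    intro z z' hz hz'
    obtain ⟨a, rfl⟩ := hπ z
    obtain ⟨b, rfl⟩ := hπ z'
    obtain ⟨c, hcab⟩ := exw a b hz
    refine ⟨π c, central_w a b c hz hz' hcab, ?_⟩
    intro x hx
    obtain ⟨v, rfl⟩ := hπ x
    obtain ⟨s, hs⟩ := exw b v hz'
    have hsc := central_w b v s hz' hx hs
    obtain ⟨t, ht⟩ := exw a s hz
    obtain ⟨r, hr⟩ := exw a v hz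
    have hrc := central_w a v r hz hx hr
    obtain ⟨q, hq⟩ := exw b r hz'
    have hmain : c * v - v * c = H * (t - q) := by
      apply cancel
      have f1 : H * (c * v - v * c) = (a * b - b * a) * v - v * (a * b - b * a) := by
        rw [mul_sub, ← mul_assoc, moveL v c, ← hcab]
      have f2 : H * (H * (t - q))
          = (a * (b * v - v * b) - (b * v - v * b) * a)
            - (b * (a * v - v * a) - (a * v - v * a) * b) := by
        rw [mul_sub H t q, mul_sub H (H * t) (H * q), ← ht, ← hq,
          mul_sub H (a * s) (s * a), mul_sub H (b * r) (r * b),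
          moveL a s, moveL b r, ← mul_assoc H s a, ← mul_assoc H r b, ← hs, ← hr]
      rw [f1, f2]; noncomm_ring
    rw [hB b v s hz' hx hs, hB a s t hz hsc ht, hB a v r hz hx hr,
      hB b r q hz' hrc hq, hB c v (t - q) (central_w a b c hz hz' hcab) hx hmain,
      map_sub]
  · -- (c)
    intro a D ha hD x hx
    obtain ⟨v, rfl⟩ := hπ x
    obtain ⟨w, hw⟩ := exw a v ha
    rw [hD v w hw, hB a v w ha hx hw]
  · -- (c')
    intro zc hzc
    obtain ⟨a, rfl⟩ := hπ zc
    have hfex : ∀ v : U, ∃ w, a * v - v * a = H * w := fun v => exw a v hzc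
    choose f hf using hfex
    have fwd : ∀ v w : U, a * v - v * a = H * w → f v = w :=
      fun v w hw => cancel _ _ ((hf v).symm.trans hw)
    have keyπ : ∀ v v' : U, π v = π v' → π (f v) = π (f v') := by
      intro v v' hvv
      have h0 : π (v - v') = 0 := by rw [map_sub, hvv, sub_self]
      obtain ⟨y, hy⟩ := (hker _).mp h0
      have h2 : H * (f v - f v') = H * (a * y - y * a) := by
        rw [mul_sub, mul_sub, ← hf v, ← hf v', moveL a y, ← mul_assoc H y a, ← hy]
        noncomm_ring
      have h3 : f v - f v' = a * y - y * a := cancel _ _ h2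
      have h4 := congrArg π h3
      simp only [map_sub, map_mul] at h4
      rw [hzc (π y)] at h4
      have h5 : π (f v) - π (f v') = 0 := by rw [h4]; abel
      exact sub_eq_zero.mp h5
    have gspec : ∀ v : U, π (f (Function.surjInv hπ (π v))) = π (f v) :=
      fun v => keyπ _ v (Function.surjInv_eq hπ (π v))
    refine ⟨a, { toFun := fun x => π (f (Function.surjInv hπ x)),
                 map_add' := ?_, map_smul' := ?_ }, rfl, ?_⟩
    · intro x y
      obtain ⟨vx, rfl⟩ := hπ x
      obtain ⟨vy, rfl⟩ := hπ y
      have e : π vx + π vy = π (vx + vy) := (map_add π vx vy).symm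
      show π (f (Function.surjInv hπ (π vx + π vy)))
          = π (f (Function.surjInv hπ (π vx))) + π (f (Function.surjInv hπ (π vy)))
      rw [e, gspec, gspec, gspec]
      have e2 : f (vx + vy) = f vx + f vy := by
        apply cancel
        rw [mul_add, ← hf, ← hf, ← hf]
        noncomm_ring
      rw [e2, map_add]
    · intro c x
      obtain ⟨vx, rfl⟩ := hπ x
      have e : c • π vx = π (c • vx) := (map_smul π c vx).symm
      show π (f (Function.surjInv hπ (c • π vx)))
          = (RingHom.id ℂ) c • π (f (Function.surjInv hπ (π vx)))
      rw [RingHom.id_apply, e, gspec, gspec]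
      have e2 : f (c • vx) = c • f vx := by
        apply cancel
        rw [mul_smul_comm, ← hf, ← hf, mul_smul_comm, smul_mul_assoc, ← smul_sub]
      rw [e2, map_smul]
    · intro v w hw
      show π (f (Function.surjInv hπ (π v))) = π w
      rw [gspec, fwd v w hw]
  · -- (d)
    intro a b Da Db ha hb hDa hDb x hx
    obtain ⟨v, rfl⟩ := hπ x
    obtain ⟨s, hs⟩ := exw b v hb
    have hsc := central_w b v s hb hx hs
    obtain ⟨t, ht⟩ := exw a s ha
    obtain ⟨r, hr⟩ := exw a v ha
    have hrc := central_w a v r ha hx hr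
    obtain ⟨q, hq⟩ := exw b r hb
    rw [hDb v s hs, hDa s t ht, hDa v r hr, hDb r q hq,
      hB b v s hb hx hs, hB a s t ha hsc ht, hB a v r ha hx hr, hB b r q hb hrc hq]
  · -- (e)
    intro w0
    obtain ⟨a0, ha0⟩ := hπ w0
    constructor
    · have hπH : π H = 0 := (hker H).mpr ⟨1, (mul_one H).symm⟩
      have hπHa : π (H * a0) = 0 := by rw [map_mul, hπH, zero_mul]
      refine ⟨H * a0, LinearMap.mulLeft ℂ w0 - LinearMap.mulRight ℂ w0, ?_, ?_, ?_⟩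
      · intro t; rw [hπHa, zero_mul, mul_zero]
      · intro v w hw
        have h3 : w = a0 * v - v * a0 :=
          cancel _ _ (hw.symm.trans (shiftH a0 v))
        simp only [LinearMap.sub_apply, LinearMap.mulLeft_apply, LinearMap.mulRight_apply]
        rw [h3, map_sub, map_mul, map_mul, ha0]
      · intro y
        simp only [LinearMap.sub_apply, LinearMap.mulLeft_apply, LinearMap.mulRight_apply]
    · intro x hx
      rw [← hx w0, sub_self]
  · -- (f)
    intro hcas a D ha hD hDz
    have casa : ∀ y : Ubar, (∀ t : Ubar, y * t = t * y) → B (π a) y = 0 := by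
      intro y hy
      obtain ⟨v, rfl⟩ := hπ y
      obtain ⟨w, hw⟩ := exw a v ha
      rw [hB a v w ha hy hw, ← hD v w hw, hDz _ hy]
    obtain ⟨cc, hcc⟩ := hcas (π a) ha casa
    have h0 : π (a - algebraMap ℂ U cc) = 0 := by
      rw [map_sub, hcc, AlgHom.commutes, sub_self]
    obtain ⟨a0, ha0⟩ := (hker _).mp h0
    have hx : a = H * a0 + algebraMap ℂ U cc := by
      rw [← ha0]; abel
    refine ⟨π a0, ?_⟩
    intro y
    obtain ⟨v, rfl⟩ := hπ y
    obtain ⟨w, hw⟩ := exw a v ha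
    rw [hD v w hw]
    have h2 : a * v - v * a = (H * a0) * v - v * (H * a0) := by
      rw [hx, add_mul, mul_add, Algebra.commutes cc v]; abel
    have h3 : w = a0 * v - v * a0 :=
      cancel _ _ (hw.symm.trans (h2.trans (shiftH a0 v)))
    rw [h3, map_sub, map_mul, map_mul]
end

section
/- There exists a ℂ-linear map D : Z → Der_ℂ(Ū), from the center Z = Z(Ū) to the ℂ-linear derivations of Ū, such that for every z ∈ Z the derivation D(z) restricted to Z equals the Hamiltonian derivation {z, −}. (Together with the hypothesis that Ū is a finitely generated Z-module, this makes the pair (Ū, Z) a Poisson order in the sense of Brown–Gordon: Z is a central subalgebra carrying a Poisson bracket, and the Hamiltonian vector fields of Z extend to derivations of Ū.) -/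
/-- there is a ℂ-linear map `D : Z → Der_ℂ(Ū)` from the center of `Ū` to the
derivations of `Ū` such that `D z` restricted to `Z` is the Hamiltonian derivation `{z, −}`
(the Poisson-order property of Brown–Gordon). -/
theorem stmt7
    (A : Type*) [CommRing A] [Algebra ℂ A] (h : A)
    (hA : Function.Bijective (algebraMap ℂ (A ⧸ Ideal.span {h})))
    (U : Type*) [Ring U] [Algebra ℂ U] [Algebra A U] [IsScalarTower ℂ A U]
    (hreg : ∀ x : U, algebraMap A U h * x = 0 → x = 0)
    (Ubar : Type*) [Ring Ubar] [Algebra ℂ Ubar]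
    (π : U →ₐ[ℂ] Ubar) (hπ : Function.Surjective π)
    (hker : ∀ x : U, π x = 0 ↔ ∃ y : U, x = algebraMap A U h * y)
    (B : Ubar → Ubar → Ubar)
    (hB : ∀ u v w : U, (∀ t : Ubar, π u * t = t * π u) → (∀ t : Ubar, π v * t = t * π v) →
        u * v - v * u = algebraMap A U h * w → B (π u) (π v) = π w) :
    ∃ D : Subalgebra.center ℂ Ubar →ₗ[ℂ] (Ubar →ₗ[ℂ] Ubar),
      (∀ z : Subalgebra.center ℂ Ubar, ∀ x y : Ubar,
          D z (x * y) = D z x * y + x * D z y) ∧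
      (∀ z x : Subalgebra.center ℂ Ubar, D z (x : Ubar) = B (z : Ubar) (x : Ubar)) := by
  classical
  set H : U := algebraMap A U h with hH
  have hinj : ∀ a b : U, H * a = H * b → a = b := by
    intro a b hab
    have h0 : H * (a - b) = 0 := by rw [mul_sub, hab, sub_self]
    exact sub_eq_zero.mp (hreg _ h0)
  have hcomm : ∀ x : U, H * x = x * H := fun x => Algebra.commutes h x
  obtain ⟨σ, hσ⟩ := π.toLinearMap.exists_rightInverse_of_surjective
    (LinearMap.range_eq_top.2 hπ)
  have hσ' : ∀ x : Ubar, π (σ x) = x := fun x => congrFun (congrArg DFunLike.coe hσ) x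
  set Z := Subalgebra.center ℂ Ubar with hZ
  have hzc : ∀ z : Z, ∀ t : Ubar, (z : Ubar) * t = t * (z : Ubar) := by
    intro z t
    exact ((Subalgebra.mem_center_iff).mp z.2 t).symm
  have ez : ∀ (z : Z) (v : U), ∃ y : U, σ (z : Ubar) * v - v * σ (z : Ubar) = H * y := by
    intro z v
    apply (hker _).1
    rw [map_sub, map_mul, map_mul, hσ', hzc z (π v), sub_self]
  set w : Z → U → U := fun z v => (ez z v).choose with hw
  have hwspec : ∀ (z : Z) (v : U), σ (z : Ubar) * v - v * σ (z : Ubar) = H * w z v :=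
    fun z v => (ez z v).choose_spec
  set g : Z → U → Ubar := fun z v => π (w z v) with hg
  -- well-definedness of g modulo ker π
  have gcong : ∀ (z : Z) (v v' : U), π v = π v' → g z v = g z v' := by
    intro z v v' hvv
    obtain ⟨y, hy⟩ := (hker (v - v')).1 (by rw [map_sub, hvv, sub_self])
    have e1 : H * (σ (z:Ubar) * y) = σ (z:Ubar) * (v - v') := by
      rw [← mul_assoc, hcomm (σ (z:Ubar)), mul_assoc, ← hy]
    have e2 : H * (y * σ (z:Ubar)) = (v - v') * σ (z:Ubar) := by
      rw [← mul_assoc, ← hy]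
    have key : H * (w z v) = H * (w z v' + (σ (z:Ubar) * y - y * σ (z:Ubar))) := by
      rw [mul_add, mul_sub, ← hwspec, ← hwspec, e1, e2]
      noncomm_ring
    have hww := hinj _ _ key
    simp only [hg, hww, map_add, map_sub, map_mul, hσ']
    rw [hzc z (π y)]
    simp
  have gadd : ∀ (z : Z) (v v' : U), g z (v + v') = g z v + g z v' := by
    intro z v v'
    have key : H * w z (v + v') = H * (w z v + w z v') := by
      rw [mul_add, ← hwspec, ← hwspec, ← hwspec]; noncomm_ring
    simp only [hg, hinj _ _ key, map_add]
  have gsmul : ∀ (z : Z) (c : ℂ) (v : U), g z (c • v) = c • g z v := by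
    intro z c v
    have key : H * w z (c • v) = H * (c • w z v) := by
      rw [mul_smul_comm, ← hwspec, ← hwspec, smul_sub, mul_smul_comm, smul_mul_assoc]
    simp only [hg, hinj _ _ key, map_smul]
  have gaddz : ∀ (z z' : Z) (v : U), g (z + z') v = g z v + g z' v := by
    intro z z' v
    have key : H * w (z + z') v = H * (w z v + w z' v) := by
      rw [mul_add, ← hwspec, ← hwspec, ← hwspec]
      have hσadd : σ ((↑(z + z') : Ubar)) = σ (z : Ubar) + σ (z' : Ubar) := by
        rw [← map_add]; rfl
      rw [hσadd]; noncomm_ring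
    simp only [hg, hinj _ _ key, map_add]
  have gsmulz : ∀ (c : ℂ) (z : Z) (v : U), g (c • z) v = c • g z v := by
    intro c z v
    have key : H * w (c • z) v = H * (c • w z v) := by
      rw [mul_smul_comm, ← hwspec, ← hwspec]
      have hσsmul : σ ((↑(c • z) : Ubar)) = c • σ (z : Ubar) := by
        rw [← map_smul]; rfl
      rw [hσsmul, smul_sub, smul_mul_assoc, mul_smul_comm]
    simp only [hg, hinj _ _ key, map_smul]
  have gmul : ∀ (z : Z) (v v' : U), g z (v * v') = g z v * π v' + π v * g z v' := by
    intro z v v'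
    have e1 : H * (v * w z v') = v * (σ (z:Ubar) * v') - v * (v' * σ (z:Ubar)) := by
      rw [← mul_assoc, hcomm v, mul_assoc, ← hwspec, mul_sub]
    have key : H * w z (v * v') = H * (w z v * v' + v * w z v') := by
      rw [mul_add, ← mul_assoc, ← hwspec, ← hwspec, e1]
      noncomm_ring
    simp only [hg, hinj _ _ key, map_add, map_mul]
  -- assemble
  let D1 : Z → Ubar →ₗ[ℂ] Ubar := fun z =>
    { toFun := fun x => g z (σ x)
      map_add' := by
        intro x y
        show g z (σ (x + y)) = g z (σ x) + g z (σ y)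
        rw [map_add, gadd]
      map_smul' := by
        intro c x
        show g z (σ (c • x)) = c • g z (σ x)
        rw [map_smul, gsmul] }
  refine ⟨{ toFun := D1
            map_add' := by intro z z'; ext x; exact gaddz z z' (σ x)
            map_smul' := by intro c z; ext x; exact gsmulz c z (σ x) }, ?_, ?_⟩
  · intro z x y
    have h1 : π (σ (x * y)) = π (σ x * σ y) := by rw [map_mul π, hσ', hσ', hσ']
    show g z (σ (x * y)) = g z (σ x) * y + x * g z (σ y)
    rw [gcong z _ _ h1, gmul, hσ', hσ']
  · intro z x
    show g z (σ (x : Ubar)) = B (z : Ubar) (x : Ubar)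
    have hu : ∀ t : Ubar, π (σ (z : Ubar)) * t = t * π (σ (z:Ubar)) := by
      intro t; rw [hσ']; exact hzc z t
    have hv : ∀ t : Ubar, π (σ (x : Ubar)) * t = t * π (σ (x:Ubar)) := by
      intro t; rw [hσ']; exact hzc x t
    have hBB := hB (σ (z:Ubar)) (σ (x:Ubar)) (w z (σ (x:Ubar))) hu hv (hwspec z (σ (x:Ubar)))
    rw [hσ', hσ'] at hBB
    exact hBB.symm
end

section
/- Let ς : U → U be an A-algebra endomorphism and ∂ : U → U an A-linear map satisfying the skew-Leibniz rule ∂(xy) = ∂(x)·ς(y) + x·∂(y) for all x, y ∈ U; let ς̄ and ∂̄ be the induced maps on Ū = U/hU. If x₁, x₂ ∈ Z(Ū) satisfy ς̄(xᵢ) = xᵢ and ∂̄(xᵢ) = 0 for i = 1, 2, then ∂̄({x₁, x₂}) = 0. -/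
/-- if an induced `(id, ς̄)`-derivation `∂̄` of `Ū` kills two central
elements `x₁, x₂` fixed by `ς̄`, then it kills their Poisson bracket `{x₁, x₂}`. -/
theorem stmt10
    (A : Type*) [CommRing A] [Algebra ℂ A] (h : A)
    (hA : Function.Bijective (algebraMap ℂ (A ⧸ Ideal.span {h})))
    (U : Type*) [Ring U] [Algebra ℂ U] [Algebra A U] [IsScalarTower ℂ A U]
    (hreg : ∀ x : U, algebraMap A U h * x = 0 → x = 0)
    (Ubar : Type*) [Ring Ubar] [Algebra ℂ Ubar]
    (π : U →ₐ[ℂ] Ubar) (hπ : Function.Surjective π)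
    (hker : ∀ x : U, π x = 0 ↔ ∃ y : U, x = algebraMap A U h * y)
    (B : Ubar → Ubar → Ubar)
    (hB : ∀ u v w : U, (∀ t : Ubar, π u * t = t * π u) → (∀ t : Ubar, π v * t = t * π v) →
        u * v - v * u = algebraMap A U h * w → B (π u) (π v) = π w)
    (ς : U →ₐ[A] U) (ςbar : Ubar →ₐ[ℂ] Ubar)
    (hς : ∀ x : U, ςbar (π x) = π (ς x))
    (der : U →ₗ[A] U)
    (hleib : ∀ x y : U, der (x * y) = der x * ς y + x * der y)
    (derbar : Ubar →ₗ[ℂ] Ubar)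
    (hder : ∀ x : U, derbar (π x) = π (der x))
    (hleibbar : ∀ x y : Ubar, derbar (x * y) = derbar x * ςbar y + x * derbar y)
    (x₁ x₂ : Ubar)
    (hx₁ : ∀ t : Ubar, x₁ * t = t * x₁) (hx₂ : ∀ t : Ubar, x₂ * t = t * x₂)
    (hfix₁ : ςbar x₁ = x₁) (hfix₂ : ςbar x₂ = x₂)
    (hkill₁ : derbar x₁ = 0) (hkill₂ : derbar x₂ = 0) :
    derbar (B x₁ x₂) = 0 := by

  obtain ⟨u₁, hu₁⟩ := hπ x₁
  obtain ⟨u₂, hu₂⟩ := hπ x₂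
  set H : U := algebraMap A U h with hH
  have hcomm : π (u₁ * u₂ - u₂ * u₁) = 0 := by
    rw [map_sub, map_mul, map_mul, hu₁, hu₂, hx₁ x₂, sub_self]
  obtain ⟨w, hw⟩ := (hker _).mp hcomm
  have hBval : B x₁ x₂ = π w := by
    have := hB u₁ u₂ w (fun t => by rw [hu₁]; exact hx₁ t)
      (fun t => by rw [hu₂]; exact hx₂ t) hw
    rwa [hu₁, hu₂] at this
  -- der uᵢ lie in h·U
  have hd1 : π (der u₁) = 0 := by rw [← hder, hu₁, hkill₁]
  have hd2 : π (der u₂) = 0 := by rw [← hder, hu₂, hkill₂]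
  obtain ⟨v₁, hv₁⟩ := (hker _).mp hd1
  obtain ⟨v₂, hv₂⟩ := (hker _).mp hd2
  -- apply der to the commutator identity
  have hderH : der (H * w) = H * der w := by
    rw [hH, ← Algebra.smul_def, map_smul, Algebra.smul_def]
  have key : H * der w = H * (v₁ * ς u₂ + u₁ * v₂ - (v₂ * ς u₁ + u₂ * v₁)) := by
    have := congrArg der hw
    rw [hderH, map_sub, hleib, hleib, hv₁, hv₂] at this
    rw [← this]
    have hc : ∀ x : U, H * x = x * H := fun x => (Algebra.commutes h x).symm ▸ rfl
    rw [← mul_assoc u₁ H v₂, ← hc u₁, ← mul_assoc u₂ H v₁, ← hc u₂]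
    simp only [mul_add, mul_sub, mul_assoc]
  have hdw : der w = v₁ * ς u₂ + u₁ * v₂ - (v₂ * ς u₁ + u₂ * v₁) := by
    have := hreg (der w - (v₁ * ς u₂ + u₁ * v₂ - (v₂ * ς u₁ + u₂ * v₁)))
      (by rw [mul_sub, key, sub_self])
    exact sub_eq_zero.mp this
  have hςu₁ : π (ς u₁) = x₁ := by rw [← hς, hu₁, hfix₁]
  have hςu₂ : π (ς u₂) = x₂ := by rw [← hς, hu₂, hfix₂]
  rw [hBval, hder, hdw, map_sub, map_add, map_add, map_mul, map_mul, map_mul, map_mul,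
    hςu₁, hςu₂, hu₁, hu₂, ← hx₂ (π v₁), hx₁ (π v₂)]
  abel
end

section
/- Let (ς_i)_{i∈I} be a family of A-algebra endomorphisms of U and (∂_i)_{i∈I} a family of A-linear (id, ς_i)-derivations of U (∂_i(xy) = ∂_i(x)ς_i(y) + x∂_i(y)), with induced maps ς̄_i, ∂̄_i on Ū = U/hU. Then the subalgebra Z' := Z(Ū) ∩ (⋂_{i∈I} ker ∂̄_i) ∩ (⋂_{i∈I} ker(ς̄_i − id)) is closed under the Poisson bracket: {x, y} ∈ Z' for all x, y ∈ Z'. Hence the Poisson order structure on (Ū, Z(Ū)) restricts to a Poisson order structure on (Ū, Z'). -/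
/-- Theorem on restriction of Poisson orders: the subalgebra
`Z' = Z(Ū) ∩ (⋂ᵢ ker ∂̄ᵢ) ∩ (⋂ᵢ ker(ς̄ᵢ − id))` is closed under the Poisson bracket. -/
theorem stmt11
    (A : Type*) [CommRing A] [Algebra ℂ A] (h : A)
    (hA : Function.Bijective (algebraMap ℂ (A ⧸ Ideal.span {h})))
    (U : Type*) [Ring U] [Algebra ℂ U] [Algebra A U] [IsScalarTower ℂ A U]
    (hreg : ∀ x : U, algebraMap A U h * x = 0 → x = 0)
    (Ubar : Type*) [Ring Ubar] [Algebra ℂ Ubar]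
    (π : U →ₐ[ℂ] Ubar) (hπ : Function.Surjective π)
    (hker : ∀ x : U, π x = 0 ↔ ∃ y : U, x = algebraMap A U h * y)
    (B : Ubar → Ubar → Ubar)
    (hB : ∀ u v w : U, (∀ t : Ubar, π u * t = t * π u) → (∀ t : Ubar, π v * t = t * π v) →
        u * v - v * u = algebraMap A U h * w → B (π u) (π v) = π w)
    (ι : Type*)
    (ς : ι → (U →ₐ[A] U)) (ςbar : ι → (Ubar →ₐ[ℂ] Ubar))
    (hς : ∀ (i : ι) (x : U), ςbar i (π x) = π (ς i x))
    (der : ι → (U →ₗ[A] U))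
    (hleib : ∀ (i : ι) (x y : U), der i (x * y) = der i x * ς i y + x * der i y)
    (derbar : ι → (Ubar →ₗ[ℂ] Ubar))
    (hder : ∀ (i : ι) (x : U), derbar i (π x) = π (der i x))
    (hleibbar : ∀ (i : ι) (x y : Ubar),
        derbar i (x * y) = derbar i x * ςbar i y + x * derbar i y)
    (x y : Ubar)
    (hx : (∀ t : Ubar, x * t = t * x) ∧ ∀ i : ι, derbar i x = 0 ∧ ςbar i x = x)
    (hy : (∀ t : Ubar, y * t = t * y) ∧ ∀ i : ι, derbar i y = 0 ∧ ςbar i y = y) :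
    (∀ t : Ubar, B x y * t = t * B x y) ∧
    ∀ i : ι, derbar i (B x y) = 0 ∧ ςbar i (B x y) = B x y := by
  obtain ⟨u, hu⟩ := hπ x
  obtain ⟨v, hv⟩ := hπ y
  set H : U := algebraMap A U h with hH
  have hcomm : ∀ a b : U, a * (H * b) = H * (a * b) := fun a b => by
    rw [← mul_assoc, ← Algebra.commutes h a, mul_assoc]
  have hcancel : ∀ a b : U, H * a = H * b → a = b := by
    intro a b hab
    have h1 : H * (a - b) = 0 := by rw [mul_sub, hab, sub_self]
    exact sub_eq_zero.mp (hreg _ h1)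
  have hxc := hx.1
  have hyc := hy.1
  have h0 : π (u * v - v * u) = 0 := by
    rw [map_sub, map_mul, map_mul, hu, hv, hxc y, sub_self]
  obtain ⟨w, hw⟩ := (hker _).mp h0
  have hBxy : B x y = π w := by
    rw [← hu, ← hv]
    exact hB u v w (fun t => by rw [hu]; exact hxc t) (fun t => by rw [hv]; exact hyc t) hw
  rw [hBxy]
  refine ⟨?_, fun i => ⟨?_, ?_⟩⟩
  · -- centrality
    intro t
    obtain ⟨s, hs⟩ := hπ t
    obtain ⟨a, ha⟩ := (hker (u * s - s * u)).mp
      (by rw [map_sub, map_mul, map_mul, hu, hs, hxc t, sub_self])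
    obtain ⟨b, hb⟩ := (hker (v * s - s * v)).mp
      (by rw [map_sub, map_mul, map_mul, hv, hs, hyc t, sub_self])
    have key : w * s - s * w = a * v - v * a + (u * b - b * u) := by
      apply hcancel
      calc H * (w * s - s * w) = (H * w) * s - s * (H * w) := by
            rw [hcomm s w]; noncomm_ring
        _ = (u*v - v*u) * s - s * (u*v - v*u) := by rw [← hw]
        _ = ((u*s - s*u) * v - v * (u*s - s*u)) + (u * (v*s - s*v) - (v*s - s*v) * u) := by
            noncomm_ring
        _ = (H*a) * v - v * (H*a) + (u * (H*b) - (H*b) * u) := by rw [ha, hb]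
        _ = H * (a * v - v * a + (u * b - b * u)) := by
            simp only [hcomm, mul_assoc, mul_sub, mul_add]
    have h2 := congrArg π key
    simp only [map_sub, map_add, map_mul, hu, hv, hs] at h2
    rw [← hyc (π a), hxc (π b)] at h2
    simp only [sub_self, add_zero] at h2
    exact sub_eq_zero.mp h2
  · -- derivation kills the bracket
    obtain ⟨a, ha⟩ := (hker (der i u)).mp (by rw [← hder, hu, (hx.2 i).1])
    obtain ⟨b, hb⟩ := (hker (der i v)).mp (by rw [← hder, hv, (hy.2 i).1])
    have key : der i w = a * ς i v + u * b - (b * ς i u + v * a) := by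
      apply hcancel
      calc H * der i w = der i (H * w) := by
            rw [hH, ← Algebra.smul_def, ← Algebra.smul_def, map_smul]
        _ = der i u * ς i v + u * der i v - (der i v * ς i u + v * der i u) := by
            rw [← hw, map_sub, hleib, hleib]
        _ = (H*a) * ς i v + u * (H*b) - ((H*b) * ς i u + v * (H*a)) := by rw [ha, hb]
        _ = H * (a * ς i v + u * b - (b * ς i u + v * a)) := by
            simp only [hcomm, mul_assoc, mul_sub, mul_add]
    have hsv : π (ς i v) = y := by rw [← hς, hv, (hy.2 i).2]
    have hsu : π (ς i u) = x := by rw [← hς, hu, (hx.2 i).2]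
    rw [hder, key, map_sub, map_add, map_add, map_mul, map_mul, map_mul, map_mul,
      hu, hv, hsv, hsu]
    rw [hxc (π b), ← hyc (π a)]
    noncomm_ring
  · -- sigma fixes the bracket
    obtain ⟨c, hc⟩ := (hker (ς i u - u)).mp
      (by rw [map_sub, ← hς, hu, (hx.2 i).2, sub_self])
    obtain ⟨d, hd⟩ := (hker (ς i v - v)).mp
      (by rw [map_sub, ← hς, hv, (hy.2 i).2, sub_self])
    have e1 : ς i u = u + H * c := by rw [← hc]; noncomm_ring
    have e2 : ς i v = v + H * d := by rw [← hd]; noncomm_ring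
    have key : ς i w = w + (u * d - d * u + (c * (v + H * d) - (v + H * d) * c)) := by
      apply hcancel
      calc H * ς i w = ς i (H * w) := by rw [map_mul, hH, AlgHom.commutes]
        _ = ς i u * ς i v - ς i v * ς i u := by rw [← hw, map_sub, map_mul, map_mul]
        _ = (u + H*c) * (v + H*d) - (v + H*d) * (u + H*c) := by rw [e1, e2]
        _ = (u*v - v*u) + (u * (H*d) - (H*d) * u
              + ((H*c) * (v + H*d) - (v + H*d) * (H*c))) := by noncomm_ring
        _ = H * (w + (u * d - d * u + (c * (v + H * d) - (v + H * d) * c))) := by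
            rw [hw]
            simp only [hcomm, mul_assoc, mul_sub, mul_add, add_mul, sub_mul]
    have hπHd : π (H * d) = 0 := (hker _).mpr ⟨d, rfl⟩
    have h2 : π (ς i w) = π w := by
      rw [key, map_add, map_add, map_sub, map_sub, map_mul, map_mul, map_mul, map_mul,
        map_add, hπHd, add_zero, hu, hv]
      rw [hxc (π d), ← hyc (π c)]
      simp only [sub_self, add_zero]
    rw [hς, h2]
end

section
/- For all i ≠ j in I, the element λ_ij := (𝐪_ii^{−c_ij}·𝐪_ij·𝐪_ji)^{c_ij} · (−c_ij)_{𝐪_ii}! · Π_{0 ≤ s < −c_ij} (𝐪_ii^s·𝐪_ij·𝐪_ji − 1) of ℂ[ν^{±1}] is nonzero, and its image in the localization 𝒜 is a unit of 𝒜 (equivalently, λ_ij⁻¹ ∈ 𝒜 inside ℂ(ν)). -/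
/-- The quantum integer `(n)_f = 1 + f + ⋯ + f^{n-1}`. -/
def qInt {R : Type*} [CommRing R] (f : R) (n : ℕ) : R :=
  ∑ k ∈ Finset.range n, f ^ k

/-- The quantum factorial `(m)_f! = (1)_f (2)_f ⋯ (m)_f`. -/
def qFact {R : Type*} [CommRing R] (f : R) : ℕ → R
  | 0 => 1
  | n + 1 => qFact f n * qInt f (n + 1)

/-- In `ℂ[ν^{±1}]`, if `x^N = 1` and `x ≠ 1` then `x - 1` is a unit. -/
lemma aux_sub_one_isUnit (x : LaurentPolynomial ℂ) (N : ℕ) (hN : N ≠ 0)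
    (hx : x ^ N = 1) (hx1 : x ≠ 1) : IsUnit (x - 1) := by
  have h1 : (∑ k ∈ Finset.range N, x ^ k) * (x - 1) = 0 := by
    rw [geom_sum_mul, hx, sub_self]
  have h2 : (∑ k ∈ Finset.range N, x ^ k) = 0 := by
    rcases mul_eq_zero.mp h1 with h | h
    · exact h
    · exact absurd (sub_eq_zero.mp h) hx1
  have h3 : (x - 1) * (∑ k ∈ Finset.range N, ∑ m ∈ Finset.range k, x ^ m)
      = -(N : LaurentPolynomial ℂ) := by
    rw [Finset.mul_sum]
    have hcongr : ∀ k ∈ Finset.range N,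
        (x - 1) * ∑ m ∈ Finset.range k, x ^ m = x ^ k - 1 := by
      intro k _
      rw [mul_comm, geom_sum_mul]
    rw [Finset.sum_congr rfl hcongr, Finset.sum_sub_distrib, h2]
    simp
  have hNu : IsUnit (-(N : LaurentPolynomial ℂ)) := by
    apply IsUnit.neg
    have : IsUnit ((N : ℂ)) := isUnit_iff_ne_zero.mpr (Nat.cast_ne_zero.mpr hN)
    simpa using this.map (algebraMap ℂ (LaurentPolynomial ℂ))
  exact isUnit_of_mul_isUnit_left (h3 ▸ hNu)

lemma aux_natCast_ne_zero (N : ℕ) (hN : N ≠ 0) : (N : LaurentPolynomial ℂ) ≠ 0 := by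
  have hinj := (algebraMap ℂ (LaurentPolynomial ℂ)).injective
  intro h0
  have : ((N : ℂ)) = 0 := by
    apply hinj; rw [map_natCast, map_zero, h0]
  exact hN (Nat.cast_eq_zero.mp this)

open scoped Classical in
/-- the element `λ_ij` is nonzero in `ℂ[ν^{±1}]` and becomes a unit in the
localization `𝒜`. -/
theorem stmt13 (θ : ℕ) (hθ : 2 ≤ θ)
    (qm : Fin θ → Fin θ → (LaurentPolynomial ℂ)ˣ)
    (hfin : ∀ i j : Fin θ, i ≠ j → ∃ n : ℕ,
      qInt ((qm i i : LaurentPolynomial ℂ)) (n + 1) *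
        (1 - ((qm i i ^ n * qm i j * qm j i : (LaurentPolynomial ℂ)ˣ) : LaurentPolynomial ℂ))
        = 0)
    (S : Submonoid (LaurentPolynomial ℂ))
    (hS : S = Submonoid.closure {x : LaurentPolynomial ℂ |
      ∃ (i : Fin θ) (j : Fin θ) (hij : i ≠ j) (s : ℕ),
        s < Nat.find (hfin i j hij) ∧
        x = ((qm i i ^ s * qm i j * qm j i : (LaurentPolynomial ℂ)ˣ) : LaurentPolynomial ℂ)
            - 1})
    (i j : Fin θ) (hij : i ≠ j) :
    ∀ lam : LaurentPolynomial ℂ,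
      lam = (((qm i i ^ (Nat.find (hfin i j hij)) * qm i j * qm j i) ^
                (-(Nat.find (hfin i j hij) : ℤ)) : (LaurentPolynomial ℂ)ˣ) :
              LaurentPolynomial ℂ) *
            qFact ((qm i i : LaurentPolynomial ℂ)) (Nat.find (hfin i j hij)) *
            ∏ s ∈ Finset.range (Nat.find (hfin i j hij)),
              (((qm i i ^ s * qm i j * qm j i : (LaurentPolynomial ℂ)ˣ) :
                  LaurentPolynomial ℂ) - 1) →
      lam ≠ 0 ∧ IsUnit (algebraMap (LaurentPolynomial ℂ) (Localization S) lam) := by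
  rintro lam rfl
  set L := LaurentPolynomial ℂ
  set n := Nat.find (hfin i j hij) with hn
  set q : L := ((qm i i : Lˣ) : L) with hq
  set a : L := ((qm i j : Lˣ) : L) * ((qm j i : Lˣ) : L) with ha
  have hcast : ∀ s : ℕ, ((qm i i ^ s * qm i j * qm j i : Lˣ) : L) = q ^ s * a := by
    intro s
    simp [Units.val_mul, ha, hq, mul_assoc]
  have hspec : qInt q (n + 1) * (1 - ((qm i i ^ n * qm i j * qm j i : Lˣ) : L)) = 0 :=
    Nat.find_spec (hfin i j hij)
  have hmin : ∀ s, s < n →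
      qInt q (s + 1) * (1 - ((qm i i ^ s * qm i j * qm j i : Lˣ) : L)) ≠ 0 :=
    fun s hs => Nat.find_min (hfin i j hij) hs
  -- nonzeroness of the basic factors
  have hqInt_ne : ∀ s, s < n → qInt q (s + 1) ≠ 0 :=
    fun s hs => left_ne_zero_of_mul (hmin s hs)
  have hfac_ne : ∀ s, s < n →
      ((qm i i ^ s * qm i j * qm j i : Lˣ) : L) - 1 ≠ 0 := by
    intro s hs h0
    apply right_ne_zero_of_mul (hmin s hs)
    rw [← neg_sub ((qm i i ^ s * qm i j * qm j i : Lˣ) : L) 1, h0, neg_zero]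
  have hqFact_ne : ∀ m, m ≤ n → qFact q m ≠ 0 := by
    intro m
    induction m with
    | zero => intro _; simp [qFact]
    | succ k ih =>
      intro hk
      have hk' : k < n := Nat.lt_of_succ_le hk
      exact mul_ne_zero (ih (le_of_lt hk')) (hqInt_ne k hk')
  constructor
  · refine mul_ne_zero (mul_ne_zero (Units.ne_zero _) (hqFact_ne n le_rfl)) ?_
    exact Finset.prod_ne_zero_iff.mpr (fun s hs => hfac_ne s (Finset.mem_range.mp hs))
  · set φ := algebraMap L (Localization S) with hφ
    -- elements of the generating set become units
    have hSunit : ∀ s, s < n → IsUnit (φ (((qm i i ^ s * qm i j * qm j i : Lˣ) : L) - 1)) := by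
      intro s hs
      have hmem : ((qm i i ^ s * qm i j * qm j i : Lˣ) : L) - 1 ∈ S := by
        rw [hS]
        exact Submonoid.subset_closure ⟨i, j, hij, s, hs, rfl⟩
      exact IsLocalization.map_units (Localization S) ⟨_, hmem⟩
    -- each quantum integer `(m)_q`, `1 ≤ m ≤ n`, becomes a unit
    have hqIntU : ∀ m, 1 ≤ m → m ≤ n → IsUnit (φ (qInt q m)) := by
      intro m hm1 hmn
      have hkey : qInt q m * (q - 1) = q ^ m - 1 := geom_sum_mul q m
      rcases mul_eq_zero.mp hspec with hA | hB
      · -- `(n+1)_q = 0`: then `q` is a root of unity and `(m)_q` is already a unit in `L`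
        have hq1 : q ≠ 1 := by
          intro h
          rw [h] at hA
          simp only [qInt, one_pow, Finset.sum_const, Finset.card_range, nsmul_eq_mul,
            mul_one] at hA
          exact aux_natCast_ne_zero (n + 1) (Nat.succ_ne_zero n) hA
        have hqN : q ^ (n + 1) = 1 := by
          have hgs := geom_sum_mul q (n + 1)
          rw [show (∑ k ∈ Finset.range (n + 1), q ^ k) = qInt q (n + 1) from rfl, hA,
            zero_mul] at hgs
          exact (sub_eq_zero.mp hgs.symm)
        have hqm_ne : qInt q m ≠ 0 := by
          obtain ⟨s, rfl⟩ : ∃ s, m = s + 1 := ⟨m - 1, (Nat.succ_pred_eq_of_pos hm1).symm⟩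
          exact hqInt_ne s (Nat.lt_of_succ_le hmn)
        have hxm1 : q ^ m ≠ 1 := by
          intro h
          have h0 : qInt q m * (q - 1) = 0 := by rw [hkey, h, sub_self]
          rcases mul_eq_zero.mp h0 with h' | h'
          · exact hqm_ne h'
          · exact hq1 (sub_eq_zero.mp h')
        have hxmN : (q ^ m) ^ (n + 1) = 1 := by
          rw [← pow_mul, mul_comm, pow_mul, hqN, one_pow]
        have hu : IsUnit (q ^ m - 1) :=
          aux_sub_one_isUnit (q ^ m) (n + 1) (Nat.succ_ne_zero n) hxmN hxm1
        have hu' : IsUnit (qInt q m) := isUnit_of_mul_isUnit_left (hkey ▸ hu)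
        exact hu'.map φ
      · -- `q^n a = 1`
        have hXn : q ^ n * a = 1 := by
          have h1 := sub_eq_zero.mp hB
          rw [hcast n] at h1
          exact h1.symm
        have hnm : n - m < n := Nat.sub_lt (lt_of_lt_of_le hm1 hmn) hm1
        have hqm_sub : q ^ m - 1
            = (-(q ^ m)) * (((qm i i ^ (n - m) * qm i j * qm j i : Lˣ) : L) - 1) := by
          rw [hcast (n - m)]
          have h2 : q ^ m * (q ^ (n - m) * a) = 1 := by
            rw [← mul_assoc, ← pow_add, Nat.add_sub_cancel' hmn, hXn]
          linear_combination h2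
        have hu2 : IsUnit (φ (q ^ m - 1)) := by
          rw [hqm_sub, map_mul, map_neg]
          exact ((((qm i i).isUnit.pow m).map φ).neg).mul (hSunit (n - m) hnm)
        have hu3 : IsUnit (φ (qInt q m) * φ (q - 1)) := by
          rw [← map_mul, hkey]; exact hu2
        exact isUnit_of_mul_isUnit_left hu3
    -- the quantum factorial becomes a unit
    have hqFactU : ∀ m, m ≤ n → IsUnit (φ (qFact q m)) := by
      intro m
      induction m with
      | zero => intro _; simp [qFact]
      | succ k ih =>
        intro hk
        rw [qFact, map_mul]
        exact (ih (le_of_lt (Nat.lt_of_succ_le hk))).mul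
          (hqIntU (k + 1) (Nat.succ_le_succ (Nat.zero_le k)) hk)
    -- product of the generators is a unit
    have hProdU : IsUnit (φ (∏ s ∈ Finset.range n,
        (((qm i i ^ s * qm i j * qm j i : Lˣ) : L) - 1))) := by
      have hmem : (∏ s ∈ Finset.range n,
          (((qm i i ^ s * qm i j * qm j i : Lˣ) : L) - 1)) ∈ S := by
        rw [hS]
        exact Submonoid.prod_mem _
          (fun s hs => Submonoid.subset_closure ⟨i, j, hij, s, Finset.mem_range.mp hs, rfl⟩)
      exact IsLocalization.map_units (Localization S) ⟨_, hmem⟩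
    rw [map_mul, map_mul]
    exact (((Units.isUnit _).map φ).mul (hqFactU n le_rfl)).mul hProdU
end

section
/- For algebra characters z, z' : Z → ℂ, the convolution z∗z' : Z → ℂ defined by (z∗z')(a) := Σ z(a₍₁₎)·z'(a₍₂₎) (Sweedler notation for the comultiplication of Z) is again an algebra character; moreover Δ_H(I_{z∗z'}) ⊆ I_z ⊗ H + H ⊗ I_{z'} (as ℂ-subspaces of H ⊗ H). Consequently the comultiplication Δ_H induces a well-defined algebra homomorphism Δ_{z,z'} : H_{z∗z'} → H_z ⊗ H_{z'} satisfying Δ_{z,z'} ∘ p_{z∗z'} = (p_z ⊗ p_{z'}) ∘ Δ_H. -/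
open scoped TensorProduct

/-- the convolution `z ∗ z'` of two algebra characters of a central
Hopf subalgebra `Z ⊆ H` is again an algebra character, the comultiplication satisfies
`Δ_H(I_{z∗z'}) ⊆ I_z ⊗ H + H ⊗ I_{z'}`, and consequently `Δ_H` induces an algebra
homomorphism `Δ_{z,z'} : H_{z∗z'} → H_z ⊗ H_{z'}` with
`Δ_{z,z'} ∘ p_{z∗z'} = (p_z ⊗ p_{z'}) ∘ Δ_H`. -/
theorem stmt14
    (H : Type*) [Ring H] [HopfAlgebra ℂ H]
    (Z : Type*) [CommRing Z] [HopfAlgebra ℂ Z]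
    (ι : Z →ₐ[ℂ] H) (hinj : Function.Injective ι)
    (hcent : ∀ (a : Z) (x : H), ι a * x = x * ι a)
    (hcomul : ∀ a : Z, Coalgebra.comul (R := ℂ) (ι a) =
        TensorProduct.map ι.toLinearMap ι.toLinearMap (Coalgebra.comul (R := ℂ) a))
    (hcounit : ∀ a : Z, Coalgebra.counit (R := ℂ) (ι a) = Coalgebra.counit (R := ℂ) a)
    (hanti : ∀ a : Z, HopfAlgebra.antipode (R := ℂ) (ι a) = ι (HopfAlgebra.antipode (R := ℂ) a))
    (z z' : Z →ₐ[ℂ] ℂ)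
    -- the quotient algebras H_z, H_{z'} and H_{z∗z'}
    (Hz Hz' Hc : Type*) [Ring Hz] [Algebra ℂ Hz] [Ring Hz'] [Algebra ℂ Hz']
    [Ring Hc] [Algebra ℂ Hc]
    (pz : H →ₐ[ℂ] Hz) (hpz : Function.Surjective pz)
    (hpzker : ∀ x : H, pz x = 0 ↔ x ∈ Ideal.span (ι '' {a : Z | z a = 0}))
    (pz' : H →ₐ[ℂ] Hz') (hpz' : Function.Surjective pz')
    (hpz'ker : ∀ x : H, pz' x = 0 ↔ x ∈ Ideal.span (ι '' {a : Z | z' a = 0}))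
    (pc : H →ₐ[ℂ] Hc) (hpc : Function.Surjective pc)
    (hpcker : ∀ x : H, pc x = 0 ↔ x ∈ Ideal.span (ι '' {a : Z |
        LinearMap.mul' ℂ ℂ (TensorProduct.map z.toLinearMap z'.toLinearMap
          (Coalgebra.comul (R := ℂ) a)) = 0})) :
    -- (1) the convolution z ∗ z' is again an algebra character
    (∃ χ : Z →ₐ[ℂ] ℂ, ∀ a : Z,
        χ a = LinearMap.mul' ℂ ℂ (TensorProduct.map z.toLinearMap z'.toLinearMap
          (Coalgebra.comul (R := ℂ) a))) ∧
    -- (2) Δ_H(I_{z∗z'}) ⊆ I_z ⊗ H + H ⊗ I_{z'}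
    (∀ x : H, x ∈ Ideal.span (ι '' {a : Z |
        LinearMap.mul' ℂ ℂ (TensorProduct.map z.toLinearMap z'.toLinearMap
          (Coalgebra.comul (R := ℂ) a)) = 0}) →
      Coalgebra.comul (R := ℂ) x ∈
        LinearMap.range (TensorProduct.map
            ((Ideal.span (ι '' {a : Z | z a = 0})).restrictScalars ℂ).subtype
            (LinearMap.id : H →ₗ[ℂ] H)) ⊔
        LinearMap.range (TensorProduct.map (LinearMap.id : H →ₗ[ℂ] H)
            ((Ideal.span (ι '' {a : Z | z' a = 0})).restrictScalars ℂ).subtype)) ∧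
    -- (3) the induced algebra homomorphism Δ_{z,z'}
    (∃ D : Hc →ₐ[ℂ] Hz ⊗[ℂ] Hz', ∀ x : H,
        D (pc x) = Algebra.TensorProduct.map pz pz' (Bialgebra.comulAlgHom ℂ H x)) := by
  classical
  -- the two ideals and the "good" set of tensors
  set Iz : Ideal H := Ideal.span (ι '' {a : Z | z a = 0}) with hIzdef
  set Iz' : Ideal H := Ideal.span (ι '' {a : Z | z' a = 0}) with hIz'def
  set T1 : Set (H ⊗[ℂ] H) := {t | ∃ i ∈ Iz, ∃ h : H, t = i ⊗ₜ[ℂ] h} with hT1def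
  set T2 : Set (H ⊗[ℂ] H) := {t | ∃ h : H, ∃ i ∈ Iz', t = h ⊗ₜ[ℂ] i} with hT2def
  -- Part (1): the convolution character
  have hlin : ∀ c : Z ⊗[ℂ] Z,
      Algebra.TensorProduct.lmul' ℂ (Algebra.TensorProduct.map z z' c)
        = LinearMap.mul' ℂ ℂ (TensorProduct.map z.toLinearMap z'.toLinearMap c) := by
    intro c
    induction c using TensorProduct.induction_on with
    | zero => simp
    | tmul x y => simp [Algebra.TensorProduct.map_tmul,
        Algebra.TensorProduct.lmul'_apply_tmul, LinearMap.mul'_apply]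
    | add c1 c2 h1 h2 => simp only [map_add, h1, h2]
  have hχ : ∀ a : Z,
      ((Algebra.TensorProduct.lmul' ℂ (S := ℂ)).comp
        ((Algebra.TensorProduct.map z z').comp (Bialgebra.comulAlgHom ℂ Z))) a
        = LinearMap.mul' ℂ ℂ (TensorProduct.map z.toLinearMap z'.toLinearMap
            (Coalgebra.comul (R := ℂ) a)) := by
    intro a
    simpa [Bialgebra.comulAlgHom_apply] using hlin (Coalgebra.comul (R := ℂ) a)
  -- the span of T1 ∪ T2 is contained in the sup of the two ranges
  have hsub : Submodule.span ℂ (T1 ∪ T2) ≤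
      LinearMap.range (TensorProduct.map ((Iz).restrictScalars ℂ).subtype
            (LinearMap.id : H →ₗ[ℂ] H)) ⊔
        LinearMap.range (TensorProduct.map (LinearMap.id : H →ₗ[ℂ] H)
            ((Iz').restrictScalars ℂ).subtype) := by
    rw [Submodule.span_le]
    rintro t (⟨i, hi, h, rfl⟩ | ⟨h, i, hi, rfl⟩)
    · exact Submodule.mem_sup_left ⟨(⟨i, hi⟩ : (Iz).restrictScalars ℂ) ⊗ₜ[ℂ] h, by simp⟩
    · exact Submodule.mem_sup_right ⟨h ⊗ₜ[ℂ] (⟨i, hi⟩ : (Iz').restrictScalars ℂ), by simp⟩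
  -- span (T1 ∪ T2) is a left ideal
  have Wmul : ∀ (t : H ⊗[ℂ] H) (w : H ⊗[ℂ] H), w ∈ Submodule.span ℂ (T1 ∪ T2) →
      t * w ∈ Submodule.span ℂ (T1 ∪ T2) := by
    intro t w hw
    induction hw using Submodule.span_induction with
    | mem s hs =>
        rcases hs with ⟨i, hi, h, rfl⟩ | ⟨h, i, hi, rfl⟩
        · induction t using TensorProduct.induction_on with
          | zero => rw [zero_mul]; exact zero_mem _
          | tmul a b =>
              rw [Algebra.TensorProduct.tmul_mul_tmul]
              exact Submodule.subset_span (Or.inl ⟨a * i, Iz.mul_mem_left a hi, b * h, rfl⟩)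
          | add t1 t2 ih1 ih2 => rw [add_mul]; exact add_mem ih1 ih2
        · induction t using TensorProduct.induction_on with
          | zero => rw [zero_mul]; exact zero_mem _
          | tmul a b =>
              rw [Algebra.TensorProduct.tmul_mul_tmul]
              exact Submodule.subset_span (Or.inr ⟨a * h, b * i, Iz'.mul_mem_left b hi, rfl⟩)
          | add t1 t2 ih1 ih2 => rw [add_mul]; exact add_mem ih1 ih2
    | zero => rw [mul_zero]; exact zero_mem _
    | add x y _ _ ihx ihy => rw [mul_add]; exact add_mem ihx ihy
    | smul r x _ ih => rw [mul_smul_comm]; exact Submodule.smul_mem _ _ ih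
  -- the key computation on Z ⊗ Z
  have hL : ∀ c : Z ⊗[ℂ] Z,
      TensorProduct.map ι.toLinearMap ι.toLinearMap c
        - (LinearMap.mul' ℂ ℂ (TensorProduct.map z.toLinearMap z'.toLinearMap c))
            • ((1 : H) ⊗ₜ[ℂ] (1 : H)) ∈ Submodule.span ℂ (T1 ∪ T2) := by
    intro c
    induction c using TensorProduct.induction_on with
    | zero => simpa using zero_mem _
    | tmul x y =>
        have h1 : ι (x - z x • 1) ∈ Iz := by
          rw [hIzdef]
          exact Ideal.subset_span ⟨x - z x • 1, by simp, rfl⟩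
        have h2 : ι (z x • y - (z x * z' y) • 1) ∈ Iz' := by
          rw [hIz'def]
          exact Ideal.subset_span ⟨z x • y - (z x * z' y) • 1, by simp [mul_comm], rfl⟩
        have he : TensorProduct.map ι.toLinearMap ι.toLinearMap (x ⊗ₜ[ℂ] y)
            - (LinearMap.mul' ℂ ℂ (TensorProduct.map z.toLinearMap z'.toLinearMap (x ⊗ₜ[ℂ] y)))
                • ((1 : H) ⊗ₜ[ℂ] (1 : H))
            = ι (x - z x • 1) ⊗ₜ[ℂ] ι y
              + (1 : H) ⊗ₜ[ℂ] ι (z x • y - (z x * z' y) • 1) := by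
          simp only [TensorProduct.map_tmul, LinearMap.mul'_apply, AlgHom.toLinearMap_apply,
            map_sub, map_smul, map_one, TensorProduct.sub_tmul, TensorProduct.tmul_sub,
            TensorProduct.smul_tmul', TensorProduct.tmul_smul, smul_eq_mul, mul_one]
          abel
        rw [he]
        exact add_mem (Submodule.subset_span (Or.inl ⟨_, h1, _, rfl⟩))
          (Submodule.subset_span (Or.inr ⟨_, _, h2, rfl⟩))
    | add c1 c2 ih1 ih2 =>
        have h := add_mem ih1 ih2
        rw [sub_add_sub_comm, ← add_smul, ← map_add, ← map_add, ← map_add] at h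
        exact h
  -- Part (2) with span (T1 ∪ T2) as target
  have part2 : ∀ x : H, x ∈ Ideal.span (ι '' {a : Z |
      LinearMap.mul' ℂ ℂ (TensorProduct.map z.toLinearMap z'.toLinearMap
        (Coalgebra.comul (R := ℂ) a)) = 0}) →
      Coalgebra.comul (R := ℂ) x ∈ Submodule.span ℂ (T1 ∪ T2) := by
    intro x hx
    induction hx using Submodule.span_induction with
    | mem s hs =>
        obtain ⟨a, ha, rfl⟩ := hs
        have h0 : LinearMap.mul' ℂ ℂ (TensorProduct.map z.toLinearMap z'.toLinearMap
            (Coalgebra.comul (R := ℂ) a)) = 0 := ha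
        have h := hL (Coalgebra.comul (R := ℂ) a)
        rw [h0, zero_smul, sub_zero] at h
        rw [hcomul a]
        exact h
    | zero => rw [map_zero]; exact zero_mem _
    | add x y _ _ ihx ihy => rw [map_add]; exact add_mem ihx ihy
    | smul h x _ ih =>
        have : Coalgebra.comul (R := ℂ) (h • x)
            = Coalgebra.comul (R := ℂ) h * Coalgebra.comul (R := ℂ) x := by
          rw [smul_eq_mul, Bialgebra.comul_mul]
        rw [this]
        exact Wmul _ _ ih
  -- `pz ⊗ pz'` kills span (T1 ∪ T2)
  have hkill : ∀ w ∈ Submodule.span ℂ (T1 ∪ T2),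
      Algebra.TensorProduct.map pz pz' w = 0 := by
    intro w hw
    induction hw using Submodule.span_induction with
    | mem t ht =>
        rcases ht with ⟨i, hi, h, rfl⟩ | ⟨h, i, hi, rfl⟩
        · rw [Algebra.TensorProduct.map_tmul, (hpzker i).2 hi, TensorProduct.zero_tmul]
        · rw [Algebra.TensorProduct.map_tmul, (hpz'ker i).2 hi, TensorProduct.tmul_zero]
    | zero => exact map_zero _
    | add x y _ _ ihx ihy => rw [map_add, ihx, ihy, add_zero]
    | smul r x _ ih => rw [map_smul, ih, smul_zero]
  -- the algebra map H →ₐ Hz ⊗ Hz'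
  set F : H →ₐ[ℂ] Hz ⊗[ℂ] Hz' :=
    (Algebra.TensorProduct.map pz pz').comp (Bialgebra.comulAlgHom ℂ H) with hFdef
  have hker : RingHom.ker pc.toRingHom ≤ RingHom.ker F.toRingHom := by
    intro x hx
    have h0 : pc x = 0 := hx
    have hxI := (hpcker x).1 h0
    have h := hkill _ (part2 x hxI)
    show F x = 0
    rw [hFdef]
    simpa [Bialgebra.comulAlgHom_apply] using h
  set D0 : Hc →+* Hz ⊗[ℂ] Hz' :=
    pc.toRingHom.liftOfRightInverse (Function.surjInv hpc)
      (Function.rightInverse_surjInv hpc) ⟨F.toRingHom, hker⟩ with hD0def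
  have hD0 : ∀ x : H, D0 (pc x) = F x := fun x =>
    pc.toRingHom.liftOfRightInverse_comp_apply _ _ ⟨F.toRingHom, hker⟩ x
  refine ⟨⟨(Algebra.TensorProduct.lmul' ℂ (S := ℂ)).comp
      ((Algebra.TensorProduct.map z z').comp (Bialgebra.comulAlgHom ℂ Z)), hχ⟩,
    fun x hx => hsub (part2 x hx), ?_⟩
  refine ⟨{ toRingHom := D0, commutes' := fun r => ?_ }, fun x => ?_⟩
  · have h1 : algebraMap ℂ Hc r = pc (algebraMap ℂ H r) := (pc.commutes r).symm
    rw [h1]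
    show D0 (pc (algebraMap ℂ H r)) = _
    rw [hD0, F.commutes r]
  · show D0 (pc x) = _
    rw [hD0]
    rfl
end

section
/- Suppose the right K-comodule algebra H (with coaction ρ) is cleft, i.e., there exists a convolution-invertible ℂ-linear map χ : K → H which is a morphism of right K-comodules: ρ ∘ χ = (χ ⊗ id_K) ∘ Δ_K. Then for every algebra character z : Z → ℂ, the map χ_z := p_z ∘ χ : K → H_z is a convolution-invertible morphism of right K-comodules: ρ_z ∘ χ_z = (χ_z ⊗ id_K) ∘ Δ_K, and there exists χ_z' : K → H_z with χ_z ∗ χ_z' = χ_z' ∗ χ_z = u_{H_z} ∘ ε_K. (Thus each H_z is a cleft K-comodule algebra.) -/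
open scoped TensorProduct


lemma stmt16_map_map {M N P Q M' N' : Type*}
    [AddCommMonoid M] [AddCommMonoid N] [AddCommMonoid P] [AddCommMonoid Q]
    [AddCommMonoid M'] [AddCommMonoid N'] [Module ℂ M] [Module ℂ N] [Module ℂ P]
    [Module ℂ Q] [Module ℂ M'] [Module ℂ N']
    (f₁ : M →ₗ[ℂ] P) (f₂ : P →ₗ[ℂ] M') (g₁ : N →ₗ[ℂ] Q) (g₂ : Q →ₗ[ℂ] N')
    (t : M ⊗[ℂ] N) :
    TensorProduct.map f₂ g₂ (TensorProduct.map f₁ g₁ t) =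
      TensorProduct.map (f₂ ∘ₗ f₁) (g₂ ∘ₗ g₁) t := by
  induction t using TensorProduct.induction_on with
  | zero => simp
  | tmul a b => simp
  | add x y hx hy => simp [hx, hy]

lemma stmt16_mul'_map_alghom {A B : Type*} [Ring A] [Ring B] [Algebra ℂ A] [Algebra ℂ B]
    (f : A →ₐ[ℂ] B) (t : A ⊗[ℂ] A) :
    LinearMap.mul' ℂ B (TensorProduct.map f.toLinearMap f.toLinearMap t) =
      f (LinearMap.mul' ℂ A t) := by
  induction t using TensorProduct.induction_on with
  | zero => simp
  | tmul a b => simp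
  | add x y hx hy => simp [hx, hy]

/-- if the right `K`-comodule algebra `H` (coaction `ρ = (id ⊗ p_ε) ∘ Δ_H`)
is cleft via a convolution-invertible comodule morphism `χ : K → H`, then for every
algebra character `z : Z → ℂ` the map `χ_z = p_z ∘ χ : K → H_z` is a convolution-invertible
morphism of right `K`-comodules; thus each `H_z` is a cleft `K`-comodule algebra. -/
theorem stmt16
    (H : Type*) [Ring H] [HopfAlgebra ℂ H]
    (Z : Type*) [CommRing Z] [HopfAlgebra ℂ Z]
    (ι : Z →ₐ[ℂ] H) (hinj : Function.Injective ι)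
    (hcent : ∀ (a : Z) (x : H), ι a * x = x * ι a)
    (K : Type*) [Ring K] [Bialgebra ℂ K]
    (pe : H →ₐ[ℂ] K) (hpe : Function.Surjective pe)
    (hpe_comul : ∀ x : H, Coalgebra.comul (R := ℂ) (pe x) =
        TensorProduct.map pe.toLinearMap pe.toLinearMap (Coalgebra.comul (R := ℂ) x))
    (hpe_counit : ∀ x : H, Coalgebra.counit (R := ℂ) (pe x) = Coalgebra.counit (R := ℂ) x)
    (hpe_ker : ∀ x : H, pe x = 0 ↔
        x ∈ Ideal.span (ι '' {a : Z | Coalgebra.counit (R := ℂ) a = (0 : ℂ)}))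
    -- `χ` is a convolution-invertible morphism of right `K`-comodules
    (χ : K →ₗ[ℂ] H)
    (hχ_comod : ∀ k : K,
        TensorProduct.map (LinearMap.id : H →ₗ[ℂ] H) pe.toLinearMap
            (Coalgebra.comul (R := ℂ) (χ k)) =
          TensorProduct.map χ (LinearMap.id : K →ₗ[ℂ] K) (Coalgebra.comul (R := ℂ) k))
    (χinv : K →ₗ[ℂ] H)
    (hχinv₁ : ∀ k : K, LinearMap.mul' ℂ H
        (TensorProduct.map χ χinv (Coalgebra.comul (R := ℂ) k)) =
        algebraMap ℂ H (Coalgebra.counit (R := ℂ) k))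
    (hχinv₂ : ∀ k : K, LinearMap.mul' ℂ H
        (TensorProduct.map χinv χ (Coalgebra.comul (R := ℂ) k)) =
        algebraMap ℂ H (Coalgebra.counit (R := ℂ) k))
    -- a character `z` and the corresponding quotient comodule algebra `H_z`
    (z : Z →ₐ[ℂ] ℂ)
    (Hz : Type*) [Ring Hz] [Algebra ℂ Hz]
    (pz : H →ₐ[ℂ] Hz) (hpz : Function.Surjective pz)
    (hpz_ker : ∀ x : H, pz x = 0 ↔ x ∈ Ideal.span (ι '' {a : Z | z a = 0}))
    (ρz : Hz →ₗ[ℂ] Hz ⊗[ℂ] K)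
    (hρz : ∀ x : H, ρz (pz x) =
        TensorProduct.map pz.toLinearMap pe.toLinearMap (Coalgebra.comul (R := ℂ) x)) :
    -- `χ_z = p_z ∘ χ` is a morphism of right `K`-comodules …
    (∀ k : K, ρz (pz (χ k)) =
        TensorProduct.map (pz.toLinearMap ∘ₗ χ) (LinearMap.id : K →ₗ[ℂ] K)
          (Coalgebra.comul (R := ℂ) k)) ∧
    -- … and is convolution-invertible
    (∃ χ' : K →ₗ[ℂ] Hz,
        (∀ k : K, LinearMap.mul' ℂ Hz
            (TensorProduct.map (pz.toLinearMap ∘ₗ χ) χ' (Coalgebra.comul (R := ℂ) k)) =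
            algebraMap ℂ Hz (Coalgebra.counit (R := ℂ) k)) ∧
        (∀ k : K, LinearMap.mul' ℂ Hz
            (TensorProduct.map χ' (pz.toLinearMap ∘ₗ χ) (Coalgebra.comul (R := ℂ) k)) =
            algebraMap ℂ Hz (Coalgebra.counit (R := ℂ) k))) := by
  constructor
  · intro k
    rw [hρz]
    have h1 : TensorProduct.map pz.toLinearMap pe.toLinearMap
        (Coalgebra.comul (R := ℂ) (χ k)) =
        TensorProduct.map pz.toLinearMap (LinearMap.id : K →ₗ[ℂ] K)
          (TensorProduct.map (LinearMap.id : H →ₗ[ℂ] H) pe.toLinearMap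
            (Coalgebra.comul (R := ℂ) (χ k))) := by
      rw [stmt16_map_map]; simp
    rw [h1, hχ_comod k, stmt16_map_map]
    simp
  · refine ⟨pz.toLinearMap ∘ₗ χinv, fun k => ?_, fun k => ?_⟩
    · have : TensorProduct.map (pz.toLinearMap ∘ₗ χ) (pz.toLinearMap ∘ₗ χinv)
          (Coalgebra.comul (R := ℂ) k) =
          TensorProduct.map pz.toLinearMap pz.toLinearMap
            (TensorProduct.map χ χinv (Coalgebra.comul (R := ℂ) k)) := by
        rw [stmt16_map_map]
      rw [this, stmt16_mul'_map_alghom, hχinv₁]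
      simp
    · have : TensorProduct.map (pz.toLinearMap ∘ₗ χinv) (pz.toLinearMap ∘ₗ χ)
          (Coalgebra.comul (R := ℂ) k) =
          TensorProduct.map pz.toLinearMap pz.toLinearMap
            (TensorProduct.map χinv χ (Coalgebra.comul (R := ℂ) k)) := by
        rw [stmt16_map_map]
      rw [this, stmt16_mul'_map_alghom, hχinv₂]
      simp
end

section
/- Let F → K be a faithfully flat homomorphism of commutative rings, J a set, U an F-algebra, π : T_F(J) → U a surjective F-algebra homomorphism from the free F-algebra on J, and (r_t)_{t∈T} a family of elements of T_F(J). Let ϕ : T_F(J) → T_K(J) be the map induced by the base change F → K (sending each generator to the corresponding generator), and let π_K : T_K(J) → K ⊗_F U be the K-algebra homomorphism with π_K(x_j) = 1 ⊗ π(x_j) for each generator x_j. Then the two-sided ideal of T_F(J) generated by {r_t : t ∈ T} equals ker π if and only if the two-sided ideal of T_K(J) generated by {ϕ(r_t) : t ∈ T} equals ker π_K. -/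
open scoped TensorProduct

section Aux

variable {F K : Type*} [CommRing F] [CommRing K] [Algebra F K]

private lemma aux_tmul_zero [Module.FaithfullyFlat F K] {Q : Type*} [AddCommGroup Q] [Module F Q]
    {x : Q} (h : (1 : K) ⊗ₜ[F] x = 0) : x = 0 := by
  have hz : LinearMap.lTensor K (LinearMap.toSpanSingleton F Q x) = 0 := by
    apply TensorProduct.ext'
    intro c a
    have h1 : c ⊗ₜ[F] x = c • ((1 : K) ⊗ₜ[F] x) := by
      rw [TensorProduct.smul_tmul', smul_eq_mul, mul_one]
    simp only [LinearMap.lTensor_tmul, LinearMap.toSpanSingleton_apply, LinearMap.zero_apply,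
      TensorProduct.tmul_smul, h1, h, smul_zero]
  have h0 := (Module.FaithfullyFlat.zero_iff_lTensor_zero (R := F) (M := K)
      (LinearMap.toSpanSingleton F Q x)).mpr hz
  simpa using LinearMap.congr_fun h0 1

private lemma aux_ker_baseChange [Module.Flat F K] {P Q : Type*} [AddCommGroup P] [Module F P]
    [AddCommGroup Q] [Module F Q] (f : P →ₗ[F] Q) :
    LinearMap.ker (f.baseChange K) = (LinearMap.ker f).baseChange K := by
  apply le_antisymm
  · intro z hz
    have hex := Module.Flat.lTensor_exact K (LinearMap.exact_subtype_ker_map f)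
    have hz' : LinearMap.lTensor K f z = 0 := by
      have : f.baseChange K z = LinearMap.lTensor K f z :=
        congrFun (LinearMap.baseChange_eq_ltensor (A := K) (f := f)) z
      rw [← this]
      exact hz
    obtain ⟨y, hy⟩ := (hex z).mp hz'
    rw [← hy]
    clear hy hz hz'
    induction y using TensorProduct.induction_on with
    | zero => simpa using Submodule.zero_mem _
    | tmul c m =>
      simpa using Submodule.tmul_mem_baseChange_of_mem c m.2
    | add a b ha hb => simpa [map_add] using Submodule.add_mem _ ha hb
  · rw [Submodule.baseChange_eq_span, Submodule.span_le]
    rintro - ⟨m, hm, rfl⟩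
    simp only [SetLike.mem_coe, LinearMap.mem_ker, TensorProduct.mk_apply,
      LinearMap.baseChange_tmul]
    rw [LinearMap.mem_ker.mp hm, TensorProduct.tmul_zero]

private lemma aux_baseChange_le [Module.FaithfullyFlat F K] {P : Type*} [AddCommGroup P]
    [Module F P] {M N : Submodule F P} (h : M.baseChange K ≤ N.baseChange K) : M ≤ N := by
  intro x hx
  have h1 : (1 : K) ⊗ₜ[F] x ∈ N.baseChange K :=
    h (Submodule.tmul_mem_baseChange_of_mem 1 hx)
  have h2 : (N.mkQ.baseChange K) ((1 : K) ⊗ₜ[F] x) = 0 := by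
    have hle : N.baseChange K ≤ LinearMap.ker (N.mkQ.baseChange K) := by
      rw [aux_ker_baseChange, Submodule.ker_mkQ]
    exact hle h1
  have h3 : (1 : K) ⊗ₜ[F] (Submodule.Quotient.mk x : P ⧸ N) = 0 := by
    simpa using h2
  have h4 := aux_tmul_zero h3
  simpa [Submodule.Quotient.mk_eq_zero] using h4

end Aux

/-- for a faithfully flat base change `F → K`, a family `(r_t)` of elements
of the free algebra `T_F(J)` generates the kernel of the presentation `π : T_F(J) → U`
(as a two-sided ideal) if and only if its image generates the kernel of the base-changed
presentation `π_K : T_K(J) → K ⊗_F U`. -/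
theorem stmt17
    (F K : Type*) [CommRing F] [CommRing K] [Algebra F K] [Module.FaithfullyFlat F K]
    (J : Type*) (U : Type*) [Ring U] [Algebra F U]
    (π : FreeAlgebra F J →ₐ[F] U) (hπ : Function.Surjective π)
    (T : Type*) (r : T → FreeAlgebra F J)
    (ϕ : FreeAlgebra F J →+* FreeAlgebra K J)
    (hϕι : ∀ j : J, ϕ (FreeAlgebra.ι F j) = FreeAlgebra.ι K j)
    (hϕsc : ∀ a : F, ϕ (algebraMap F (FreeAlgebra F J) a) =
        algebraMap K (FreeAlgebra K J) (algebraMap F K a))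
    (πK : FreeAlgebra K J →ₐ[K] K ⊗[F] U)
    (hπK : ∀ j : J, πK (FreeAlgebra.ι K j) = (1 : K) ⊗ₜ[F] π (FreeAlgebra.ι F j)) :
    TwoSidedIdeal.span (Set.range r) = TwoSidedIdeal.ker (π : FreeAlgebra F J →+* U) ↔
    TwoSidedIdeal.span (ϕ '' Set.range r) =
      TwoSidedIdeal.ker (πK : FreeAlgebra K J →+* K ⊗[F] U) := by
  classical
  -- abbreviations
  let A := FreeAlgebra F J
  let B := FreeAlgebra K J
  -- the F-algebra map A → B sending generators to generators
  let g : FreeAlgebra F J →ₐ[F] FreeAlgebra K J :=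
    FreeAlgebra.lift F (fun j => FreeAlgebra.ι K j)
  have hgι : ∀ j, g (FreeAlgebra.ι F j) = FreeAlgebra.ι K j := fun j => by
    simp [g]
  -- forward map K ⊗ A → B
  let fwd : K ⊗[F] FreeAlgebra F J →ₐ[K] FreeAlgebra K J :=
    Algebra.TensorProduct.lift (Algebra.ofId K (FreeAlgebra K J)) g
      (fun c x => by
        show _ * _ = _ * _
        simpa [Algebra.ofId_apply] using Algebra.commutes c (g x))
  have hfwd_tmul : ∀ (c : K) (a : FreeAlgebra F J),
      fwd (c ⊗ₜ[F] a) = algebraMap K (FreeAlgebra K J) c * g a := fun c a => by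
    simp [fwd, Algebra.ofId_apply]
  -- backward map B → K ⊗ A
  let bwd : FreeAlgebra K J →ₐ[K] K ⊗[F] FreeAlgebra F J :=
    FreeAlgebra.lift K (fun j => (1 : K) ⊗ₜ[F] FreeAlgebra.ι F j)
  have hbwdι : ∀ j, bwd (FreeAlgebra.ι K j) = (1 : K) ⊗ₜ[F] FreeAlgebra.ι F j := fun j => by
    simp [bwd]
  -- g agrees with ϕ
  have hgϕ : ∀ a : FreeAlgebra F J, g a = ϕ a := by
    intro a
    induction a using FreeAlgebra.induction with
    | grade0 b =>
      rw [hϕsc, AlgHom.commutes, IsScalarTower.algebraMap_apply F K (FreeAlgebra K J)]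
    | grade1 j => rw [hgι, hϕι]
    | mul x y hx hy => rw [map_mul, map_mul, hx, hy]
    | add x y hx hy => rw [map_add, map_add, hx, hy]
  -- bwd ∘ g is the canonical inclusion
  have hga : ∀ a : FreeAlgebra F J, bwd (g a) = (1 : K) ⊗ₜ[F] a := by
    intro a
    induction a using FreeAlgebra.induction with
    | grade0 b =>
      rw [AlgHom.commutes, IsScalarTower.algebraMap_apply F K (FreeAlgebra K J),
        AlgHom.commutes]
      rw [Algebra.TensorProduct.algebraMap_apply]
      simp [Algebra.algebraMap_eq_smul_one, TensorProduct.smul_tmul]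
    | grade1 j => rw [hgι, hbwdι]
    | mul x y hx hy =>
      rw [map_mul, map_mul, hx, hy, Algebra.TensorProduct.tmul_mul_tmul, one_mul]
    | add x y hx hy =>
      rw [map_add, map_add, hx, hy, TensorProduct.tmul_add]
  -- bwd ∘ fwd = id
  have hbf : ∀ w : K ⊗[F] FreeAlgebra F J, bwd (fwd w) = w := by
    intro w
    induction w using TensorProduct.induction_on with
    | zero => simp
    | tmul c a =>
      rw [hfwd_tmul, map_mul, AlgHom.commutes, hga,
        Algebra.TensorProduct.algebraMap_apply, Algebra.TensorProduct.tmul_mul_tmul,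
        mul_one, one_mul]
      simp
    | add x y hx hy => rw [map_add, map_add, hx, hy]
  -- fwd ∘ bwd = id
  have hfb : ∀ x : FreeAlgebra K J, fwd (bwd x) = x := by
    intro x
    induction x using FreeAlgebra.induction with
    | grade0 c => rw [AlgHom.commutes, AlgHom.commutes]
    | grade1 j => rw [hbwdι, hfwd_tmul, map_one, one_mul, hgι]
    | mul x y hx hy => rw [map_mul, map_mul, hx, hy]
    | add x y hx hy => rw [map_add, map_add, hx, hy]
  -- πK ∘ g is the inclusion composed with π
  have hπKg : ∀ a : FreeAlgebra F J, πK (g a) = (1 : K) ⊗ₜ[F] π a := by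
    intro a
    induction a using FreeAlgebra.induction with
    | grade0 b =>
      rw [AlgHom.commutes, IsScalarTower.algebraMap_apply F K (FreeAlgebra K J),
        AlgHom.commutes, AlgHom.commutes, Algebra.TensorProduct.algebraMap_apply]
      simp [Algebra.algebraMap_eq_smul_one, TensorProduct.smul_tmul]
    | grade1 j => rw [hgι, hπK]
    | mul x y hx hy =>
      rw [map_mul, map_mul, hx, hy, Algebra.TensorProduct.tmul_mul_tmul, one_mul, map_mul]
    | add x y hx hy =>
      rw [map_add, map_add, hx, hy, map_add, TensorProduct.tmul_add]
  -- πK ∘ fwd is the base change of π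
  have hπKfwd : ∀ w : K ⊗[F] FreeAlgebra F J,
      πK (fwd w) = (π.toLinearMap.baseChange K) w := by
    intro w
    induction w using TensorProduct.induction_on with
    | zero => simp
    | tmul c a =>
      rw [hfwd_tmul, map_mul, AlgHom.commutes, hπKg, LinearMap.baseChange_tmul,
        Algebra.TensorProduct.algebraMap_apply, Algebra.TensorProduct.tmul_mul_tmul,
        mul_one, one_mul]
      rfl
    | add x y hx hy => rw [map_add, map_add, hx, hy, map_add]
  -- the two F-submodules of A
  set M : Submodule F (FreeAlgebra F J) :=
    Submodule.restrictScalars F (TwoSidedIdeal.asIdeal (TwoSidedIdeal.span (Set.range r)))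
    with hM
  set N : Submodule F (FreeAlgebra F J) := LinearMap.ker π.toLinearMap with hN
  have hmemM : ∀ x : FreeAlgebra F J, x ∈ M ↔ x ∈ TwoSidedIdeal.span (Set.range r) := by
    intro x
    rw [hM, Submodule.restrictScalars_mem, TwoSidedIdeal.mem_asIdeal]
  have hmemN : ∀ x : FreeAlgebra F J, x ∈ N ↔ π x = 0 := fun x => Iff.rfl
  -- the base change of M is a two-sided ideal
  have hTl0 : ∀ y ∈ M.baseChange K, ∀ x, x * y ∈ M.baseChange K := by
    intro y hy
    rw [Submodule.baseChange_eq_span] at hy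
    induction hy using Submodule.span_induction with
    | mem y hy =>
      obtain ⟨m, hm, rfl⟩ := hy
      intro x
      induction x using TensorProduct.induction_on with
      | zero => simpa using Submodule.zero_mem _
      | tmul c a =>
        simp only [TensorProduct.mk_apply, Algebra.TensorProduct.tmul_mul_tmul, mul_one]
        refine Submodule.tmul_mem_baseChange_of_mem c ?_
        rw [hmemM]
        exact TwoSidedIdeal.mul_mem_left _ a m ((hmemM m).mp hm)
      | add x₁ x₂ h₁ h₂ =>
        rw [add_mul]
        exact Submodule.add_mem _ h₁ h₂
    | zero => intro x; simpa using Submodule.zero_mem _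
    | add y₁ y₂ hy₁ hy₂ ih₁ ih₂ =>
      intro x
      rw [mul_add]
      exact Submodule.add_mem _ (ih₁ x) (ih₂ x)
    | smul c y hy ih =>
      intro x
      rw [mul_smul_comm]
      exact Submodule.smul_mem _ c (ih x)
  have hTr0 : ∀ x ∈ M.baseChange K, ∀ y, x * y ∈ M.baseChange K := by
    intro x hx
    rw [Submodule.baseChange_eq_span] at hx
    induction hx using Submodule.span_induction with
    | mem x hx =>
      obtain ⟨m, hm, rfl⟩ := hx
      intro y
      induction y using TensorProduct.induction_on with
      | zero => simpa using Submodule.zero_mem _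
      | tmul c a =>
        simp only [TensorProduct.mk_apply, Algebra.TensorProduct.tmul_mul_tmul, one_mul]
        refine Submodule.tmul_mem_baseChange_of_mem c ?_
        rw [hmemM]
        exact TwoSidedIdeal.mul_mem_right _ m a ((hmemM m).mp hm)
      | add y₁ y₂ h₁ h₂ =>
        rw [mul_add]
        exact Submodule.add_mem _ h₁ h₂
    | zero => intro y; simpa using Submodule.zero_mem _
    | add x₁ x₂ hx₁ hx₂ ih₁ ih₂ =>
      intro y
      rw [add_mul]
      exact Submodule.add_mem _ (ih₁ y) (ih₂ y)
    | smul c x hx ih =>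
      intro y
      rw [smul_mul_assoc]
      exact Submodule.smul_mem _ c (ih y)
  have hTl : ∀ {x y : K ⊗[F] FreeAlgebra F J}, y ∈ M.baseChange K →
      x * y ∈ M.baseChange K := fun {x y} hy => hTl0 y hy x
  have hTr : ∀ {x y : K ⊗[F] FreeAlgebra F J}, x ∈ M.baseChange K →
      x * y ∈ M.baseChange K := fun {x y} hx => hTr0 x hx y
  let T0 : TwoSidedIdeal (K ⊗[F] FreeAlgebra F J) :=
    TwoSidedIdeal.mk' (M.baseChange K : Set (K ⊗[F] FreeAlgebra F J))
      (Submodule.zero_mem _) (fun hx hy => Submodule.add_mem _ hx hy)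
      (fun hx => Submodule.neg_mem _ hx) hTl hTr
  have hmemT0 : ∀ x, x ∈ T0 ↔ x ∈ M.baseChange K := fun x =>
    TwoSidedIdeal.mem_mk' _ _ _ _ _ _ x
  -- ϕ maps the span into the span of the image
  have hspanmap : ∀ a : FreeAlgebra F J, a ∈ TwoSidedIdeal.span (Set.range r) →
      ϕ a ∈ TwoSidedIdeal.span (ϕ '' Set.range r) := by
    intro a ha
    rw [TwoSidedIdeal.mem_span_iff] at ha
    have := ha (TwoSidedIdeal.comap ϕ (TwoSidedIdeal.span (ϕ '' Set.range r)))
      (fun x hx => by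
        rw [SetLike.mem_coe, TwoSidedIdeal.mem_comap]
        exact TwoSidedIdeal.subset_span (Set.mem_image_of_mem ϕ hx))
    rwa [TwoSidedIdeal.mem_comap] at this
  -- fwd maps baseChange M into the span of ϕ '' range r
  have hC1fwd : ∀ w ∈ M.baseChange K, fwd w ∈ TwoSidedIdeal.span (ϕ '' Set.range r) := by
    intro w hw
    rw [Submodule.baseChange_eq_span] at hw
    induction hw using Submodule.span_induction with
    | mem w hw =>
      obtain ⟨m, hm, rfl⟩ := hw
      simp only [TensorProduct.mk_apply]
      rw [hfwd_tmul, map_one, one_mul, hgϕ]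
      exact hspanmap m ((hmemM m).mp hm)
    | zero => rw [map_zero]; exact TwoSidedIdeal.zero_mem _
    | add x y hx hy ihx ihy => rw [map_add]; exact TwoSidedIdeal.add_mem _ ihx ihy
    | smul c x hx ih =>
      rw [map_smul, Algebra.smul_def]
      exact TwoSidedIdeal.mul_mem_left _ _ _ ih
  -- key equivalence C1
  have hC1 : ∀ x : FreeAlgebra K J,
      x ∈ TwoSidedIdeal.span (ϕ '' Set.range r) ↔ bwd x ∈ M.baseChange K := by
    intro x
    constructor
    · intro hx
      rw [TwoSidedIdeal.mem_span_iff] at hx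
      have := hx (TwoSidedIdeal.comap bwd T0) (fun z hz => by
        rw [SetLike.mem_coe, TwoSidedIdeal.mem_comap, hmemT0]
        obtain ⟨-, ⟨t, rfl⟩, rfl⟩ := hz
        rw [← hgϕ, hga]
        exact Submodule.tmul_mem_baseChange_of_mem 1
          ((hmemM _).mpr (TwoSidedIdeal.subset_span (Set.mem_range_self t))))
      rw [TwoSidedIdeal.mem_comap, hmemT0] at this
      exact this
    · intro hx
      have := hC1fwd (bwd x) hx
      rwa [hfb] at this
  -- key equivalence C2
  have hC2 : ∀ x : FreeAlgebra K J, πK x = 0 ↔ bwd x ∈ N.baseChange K := by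
    intro x
    have h1 : πK x = (π.toLinearMap.baseChange K) (bwd x) := by
      rw [← hπKfwd, hfb]
    rw [h1, ← LinearMap.mem_ker, aux_ker_baseChange]
  -- LHS reduction
  have hLHS : (TwoSidedIdeal.span (Set.range r) =
      TwoSidedIdeal.ker (π : FreeAlgebra F J →+* U)) ↔ M = N := by
    constructor
    · intro h
      ext x
      rw [hmemM, hmemN, h, TwoSidedIdeal.mem_ker]
      rfl
    · intro h
      refine SetLike.ext fun x => ?_
      rw [← hmemM, h, TwoSidedIdeal.mem_ker]
      rfl
  -- RHS reduction
  have hRHS : (TwoSidedIdeal.span (ϕ '' Set.range r) =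
      TwoSidedIdeal.ker (πK : FreeAlgebra K J →+* K ⊗[F] U)) ↔
      M.baseChange K = N.baseChange K := by
    constructor
    · intro h
      ext w
      have h1 := hC1 (fwd w)
      have h2 := hC2 (fwd w)
      rw [hbf] at h1 h2
      refine h1.symm.trans ?_
      rw [h]
      exact (TwoSidedIdeal.mem_ker _).trans h2
    · intro h
      refine SetLike.ext fun x => (hC1 x).trans ?_
      rw [h]
      exact (hC2 x).symm.trans (TwoSidedIdeal.mem_ker _).symm
  rw [hLHS, hRHS]
  constructor
  · intro h; rw [h]
  · intro h
    exact le_antisymm (aux_baseChange_le (le_of_eq h)) (aux_baseChange_le (le_of_eq h.symm))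
end
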